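/- arXiv:0912.0509 — 8 statements merged into one kernel-verified Lean document; each statement's English description precedes it below -/
import Mathlib

section
/- Let X, Y be bounded R^d-valued random vectors with X ⪰ Y in the concave order and L(X) ≠ L(Y). Then for every strictly convex continuous function φ : R^d → R one has E[φ(X)] < E[φ(Y)]. -/
open MeasureTheory Filter Topology
open scoped NNReal ENNReal

lemma subgrad_exists {d : ℕ} {φ : (Fin d → ℝ) → ℝ} (hφ : ConvexOn ℝ Set.univ φ)
    (hc : Continuous φ) (x : Fin d → ℝ) :
    ∃ ℓ : (Fin d → ℝ) →L[ℝ] ℝ, ∀ y, φ x + ℓ (y - x) ≤ φ y := by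
  classical
  have hconv : Convex ℝ {p : (Fin d → ℝ) × ℝ | φ p.1 < p.2} := by
    intro p hp q hq a b ha hb hab
    simp only [Set.mem_setOf_eq] at *
    have h1 : φ (a • p.1 + b • q.1) ≤ a * φ p.1 + b * φ q.1 := by
      simpa [smul_eq_mul] using hφ.2 (Set.mem_univ p.1) (Set.mem_univ q.1) ha hb hab
    have h2 : a * φ p.1 + b * φ q.1 < a * p.2 + b * q.2 := by
      rcases ha.lt_or_eq with ha' | ha'
      · rcases hb.lt_or_eq with hb' | hb'
        · exact add_lt_add (by nlinarith) (by nlinarith)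
        · rw [← hb']; simp only [zero_mul, add_zero]; rw [← hb'] at hab; nlinarith
      · rw [← ha']; simp only [zero_mul, zero_add]; rw [← ha'] at hab; nlinarith
    exact lt_of_le_of_lt h1 h2
  have hopen : IsOpen {p : (Fin d → ℝ) × ℝ | φ p.1 < p.2} := by
    have heq : {p : (Fin d → ℝ) × ℝ | φ p.1 < p.2}
        = (fun p : (Fin d → ℝ) × ℝ => p.2 - φ p.1) ⁻¹' (Set.Ioi 0) := by
      ext p; simp [sub_pos]
    rw [heq]
    exact (continuous_snd.sub (hc.comp continuous_fst)).isOpen_preimage _ isOpen_Ioi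
  have hx : (x, φ x) ∉ {p : (Fin d → ℝ) × ℝ | φ p.1 < p.2} := by simp
  obtain ⟨F, hF⟩ := geometric_hahn_banach_open_point hconv hopen hx
  set g : (Fin d → ℝ) →L[ℝ] ℝ := F.comp (ContinuousLinearMap.inl ℝ (Fin d → ℝ) ℝ) with hg
  set β : ℝ := F (0, 1) with hβ
  have hdecomp : ∀ (y : Fin d → ℝ) (z : ℝ), F (y, z) = g y + z * β := by
    intro y z
    have e1 : ((y, z) : (Fin d → ℝ) × ℝ) = (y, 0) + (0, z) := by simp
    have e2 : (((0 : Fin d → ℝ), z) : (Fin d → ℝ) × ℝ) = z • ((0 : Fin d → ℝ), (1:ℝ)) := by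
      simp [Prod.smul_mk]
    rw [e1, map_add, e2, ContinuousLinearMap.map_smul, smul_eq_mul]
    rfl
  have hβneg : β < 0 := by
    have h1 : F (x, φ x + 1) < F (x, φ x) := hF _ (by simp)
    rw [hdecomp, hdecomp] at h1
    nlinarith
  have hkey : ∀ y, g y + φ y * β ≤ g x + φ x * β := by
    intro y
    have h2 : ∀ ε : ℝ, 0 < ε → g y + (φ y + ε) * β < g x + φ x * β := by
      intro ε hε
      have h3 := hF (y, φ y + ε) (by simpa using hε)
      rwa [hdecomp, hdecomp] at h3
    by_contra hcon
    push_neg at hcon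
    have hε : (0:ℝ) < (g y + φ y * β - (g x + φ x * β)) / (-2 * β) := by
      apply div_pos (by linarith) (by linarith)
    have h4 := h2 _ hε
    have hβ0 : β ≠ 0 := by linarith
    have e : (g y + φ y * β - (g x + φ x * β)) / (-2 * β) * β
        = -(g y + φ y * β - (g x + φ x * β)) / 2 := by
      field_simp
    nlinarith [h4, e]
  refine ⟨(-β)⁻¹ • g, fun y => ?_⟩
  have hβ' : (0:ℝ) < -β := by linarith
  have hβ0 : β ≠ 0 := by linarith
  have hineq : g y - g x ≤ (φ x - φ y) * β := by linarith [hkey y]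
  have h3 : (-β)⁻¹ * (g y - g x) ≤ (-β)⁻¹ * ((φ x - φ y) * β) :=
    mul_le_mul_of_nonneg_left hineq (inv_nonneg.mpr hβ'.le)
  have h4 : (-β)⁻¹ * ((φ x - φ y) * β) = φ y - φ x := by
    field_simp
    ring
  simp only [ContinuousLinearMap.smul_apply, smul_eq_mul, map_sub]
  linarith [h3, h4 ▸ h3]

section Envelope

variable {d : ℕ}

/-- The affine function associated to a pair (linear functional, constant). -/
noncomputable def affQ (q : ((Fin d → ℝ) →L[ℝ] ℝ) × ℝ) (x : Fin d → ℝ) : ℝ := q.1 x + q.2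

/-- Slope-constrained affine majorants of `h` on the closed ball of radius `R`. -/
def ASet (R L : ℝ) (h : (Fin d → ℝ) → ℝ) : Set (((Fin d → ℝ) →L[ℝ] ℝ) × ℝ) :=
  {q | (∀ u, |q.1 u| ≤ L * ‖u‖) ∧ ∀ y ∈ Metric.closedBall (0 : Fin d → ℝ) R, h y ≤ affQ q y}

/-- The slope-constrained concave envelope. -/
noncomputable def env (R L : ℝ) (h : (Fin d → ℝ) → ℝ) (x : Fin d → ℝ) : ℝ :=
  sInf ((fun q => affQ q x) '' ASet R L h)

variable {R L : ℝ} {h : (Fin d → ℝ) → ℝ}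

lemma ASet_nonempty (hR : 0 ≤ R) (hL : 0 ≤ L) (hc : Continuous h) : (ASet R L h).Nonempty := by
  obtain ⟨z, hz, hzmax⟩ := (isCompact_closedBall (0 : Fin d → ℝ) R).exists_isMaxOn
    (Metric.nonempty_closedBall.mpr hR) hc.continuousOn
  refine ⟨(0, h z), fun u => by simpa using mul_nonneg hL (norm_nonneg u), fun y hy => ?_⟩
  simpa [affQ] using hzmax hy

lemma env_bddBelow (hR : 0 ≤ R) (x : Fin d → ℝ) :
    BddBelow ((fun q => affQ q x) '' ASet R L h) := by
  refine ⟨h 0 - L * ‖x‖, ?_⟩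
  rintro _ ⟨q, ⟨hq1, hq2⟩, rfl⟩
  have h0 : h 0 ≤ q.2 := by
    have := hq2 0 (by simp [hR])
    simpa [affQ] using this
  have h1 : -(L * ‖x‖) ≤ q.1 x := by
    have := hq1 x
    have := abs_le.mp this
    linarith [this.1]
  simp only [affQ]
  linarith

lemma env_le (hR : 0 ≤ R) {q : ((Fin d → ℝ) →L[ℝ] ℝ) × ℝ} (hq : q ∈ ASet R L h)
    (x : Fin d → ℝ) : env R L h x ≤ affQ q x :=
  csInf_le (env_bddBelow hR x) ⟨q, hq, rfl⟩

lemma le_env (hR : 0 ≤ R) (hL : 0 ≤ L) (hc : Continuous h) {x : Fin d → ℝ}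
    (hx : x ∈ Metric.closedBall (0 : Fin d → ℝ) R) : h x ≤ env R L h x := by
  refine le_csInf ((ASet_nonempty hR hL hc).image _) ?_
  rintro _ ⟨q, hq, rfl⟩
  exact hq.2 x hx

lemma env_concave (hR : 0 ≤ R) (hL : 0 ≤ L) (hc : Continuous h) :
    ConcaveOn ℝ Set.univ (env R L h) := by
  refine ⟨convex_univ, fun x _ y _ a b ha hb hab => ?_⟩
  refine le_csInf ((ASet_nonempty hR hL hc).image _) ?_
  rintro _ ⟨q, hq, rfl⟩
  show a • env R L h x + b • env R L h y ≤ affQ q (a • x + b • y)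
  have e : affQ q (a • x + b • y) = a * affQ q x + b * affQ q y := by
    simp only [affQ, map_add, ContinuousLinearMap.map_smul, smul_eq_mul]
    have hq2 : a * q.2 + b * q.2 = q.2 := by linear_combination q.2 * hab
    linarith
  rw [e]
  have h1 : a * env R L h x ≤ a * affQ q x :=
    mul_le_mul_of_nonneg_left (env_le hR hq x) ha
  have h2 : b * env R L h y ≤ b * affQ q y :=
    mul_le_mul_of_nonneg_left (env_le hR hq y) hb
  simp only [smul_eq_mul]
  linarith

lemma env_continuous (hR : 0 ≤ R) (hL : 0 ≤ L) (hc : Continuous h) :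
    Continuous (env R L h) := by
  have key : ∀ x y : Fin d → ℝ, env R L h x ≤ env R L h y + L * ‖x - y‖ := by
    intro x y
    have h1 : ∀ q ∈ ASet R L h, env R L h x - L * ‖x - y‖ ≤ affQ q y := by
      intro q hq
      have h2 : env R L h x ≤ affQ q x := env_le hR hq x
      have h3 : affQ q x - affQ q y = q.1 (x - y) := by simp [affQ, map_sub]
      have h4 := abs_le.mp (hq.1 (x - y))
      linarith [h4.2]
    have h5 : env R L h x - L * ‖x - y‖ ≤ env R L h y := by
      refine le_csInf ((ASet_nonempty hR hL hc).image _) ?_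
      rintro _ ⟨q, hq, rfl⟩
      exact h1 q hq
    linarith
  have lip : LipschitzWith (Real.toNNReal L) (env R L h) := by
    refine LipschitzWith.of_dist_le_mul (fun x y => ?_)
    rw [Real.dist_eq, dist_eq_norm]
    have k1 := key x y
    have k2 := key y x
    rw [norm_sub_rev y x] at k2
    rw [abs_le]
    constructor
    · rw [Real.coe_toNNReal _ hL]; linarith
    · rw [Real.coe_toNNReal _ hL]; linarith
  exact lip.continuous

end Envelope

lemma strict_subgrad {d : ℕ} {φ : (Fin d → ℝ) → ℝ} (hφ : StrictConvexOn ℝ Set.univ φ)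
    (hφc : Continuous φ) (x : Fin d → ℝ) :
    ∃ ℓ : (Fin d → ℝ) →L[ℝ] ℝ, (∀ y, φ x + ℓ (y - x) ≤ φ y) ∧
      (∀ y, y ≠ x → φ x + ℓ (y - x) < φ y) := by
  obtain ⟨ℓ, hℓ⟩ := subgrad_exists hφ.convexOn hφc x
  refine ⟨ℓ, hℓ, fun y hy => ?_⟩
  set m := (2⁻¹ : ℝ) • x + (2⁻¹ : ℝ) • y with hm
  have hstr : φ m < (2⁻¹:ℝ) * φ x + (2⁻¹:ℝ) * φ y := by
    have := hφ.2 (Set.mem_univ x) (Set.mem_univ y) (Ne.symm hy)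
      (by norm_num : (0:ℝ) < 2⁻¹) (by norm_num : (0:ℝ) < 2⁻¹) (by norm_num)
    simpa [smul_eq_mul] using this
  have h1 : φ x + ℓ (m - x) ≤ φ m := hℓ m
  have e : m - x = (2⁻¹ : ℝ) • (y - x) := by
    funext i
    simp only [hm, Pi.add_apply, Pi.sub_apply, Pi.smul_apply, smul_eq_mul]
    ring
  rw [e, ContinuousLinearMap.map_smul, smul_eq_mul] at h1
  linarith

lemma subgrad_norm_bound {d : ℕ} {φ : (Fin d → ℝ) → ℝ} {C m M : ℝ}
    {x : Fin d → ℝ} (hx : ‖x‖ ≤ C) {ℓ : (Fin d → ℝ) →L[ℝ] ℝ}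
    (hℓ : ∀ y, φ x + ℓ (y - x) ≤ φ y)
    (hm : ∀ y : Fin d → ℝ, ‖y‖ ≤ C + 1 → m ≤ φ y)
    (hM : ∀ y : Fin d → ℝ, ‖y‖ ≤ C + 1 → φ y ≤ M) :
    ∀ u, |ℓ u| ≤ (M - m) * ‖u‖ := by
  have bound : ∀ v : Fin d → ℝ, ‖v‖ = 1 → ℓ v ≤ M - m := by
    intro v hv
    have h1 : ℓ ((x + v) - x) ≤ φ (x + v) - φ x := by linarith [hℓ (x + v)]
    have e : (x + v) - x = v := by abel
    rw [e] at h1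
    have h2 : φ (x + v) ≤ M := hM _ (by
      calc ‖x + v‖ ≤ ‖x‖ + ‖v‖ := norm_add_le x v
        _ ≤ C + 1 := by rw [hv]; linarith)
    have h3 : m ≤ φ x := hm _ (by linarith)
    linarith
  intro u
  rcases eq_or_ne u 0 with rfl | hu
  · simp
  · have hun : (0:ℝ) < ‖u‖ := norm_pos_iff.mpr hu
    set w := ‖u‖⁻¹ • u with hw
    have hwn : ‖w‖ = 1 := by
      rw [hw, norm_smul, norm_inv, norm_norm]
      field_simp
    have habs : |ℓ w| ≤ M - m := by
      rw [abs_le]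
      constructor
      · have := bound (-w) (by rw [norm_neg]; exact hwn)
        rw [map_neg] at this
        linarith
      · exact bound w hwn
    have e : u = ‖u‖ • w := by
      rw [hw, smul_smul]
      field_simp
      rw [one_smul]
    calc |ℓ u| = |ℓ (‖u‖ • w)| := by rw [← e]
      _ = ‖u‖ * |ℓ w| := by rw [ContinuousLinearMap.map_smul, smul_eq_mul, abs_mul, abs_of_nonneg hun.le]
      _ ≤ ‖u‖ * (M - m) := mul_le_mul_of_nonneg_left habs hun.le
      _ = (M - m) * ‖u‖ := mul_comm _ _

lemma integrable_comp_cont {Ω : Type*} [MeasurableSpace Ω] (μ : Measure Ω)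
    [IsProbabilityMeasure μ] {d : ℕ} {Z : Ω → (Fin d → ℝ)} (hZm : Measurable Z)
    {C : ℝ} (hC : 0 ≤ C) (hZb : ∀ ω, ‖Z ω‖ ≤ C) {g : (Fin d → ℝ) → ℝ}
    (hg : Continuous g) : Integrable (fun ω => g (Z ω)) μ := by
  obtain ⟨z, hz, hzmax⟩ := (isCompact_closedBall (0 : Fin d → ℝ) C).exists_isMaxOn
    (Metric.nonempty_closedBall.mpr hC) hg.abs.continuousOn
  refine Integrable.mono' (integrable_const (|g z|)) ((hg.measurable.comp hZm).aestronglyMeasurable) ?_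
  filter_upwards with ω
  rw [Real.norm_eq_abs]
  exact hzmax (by simpa [Metric.mem_closedBall, dist_zero_right] using hZb ω)

lemma key_ineq {Ω : Type*} [MeasurableSpace Ω] (μ : Measure Ω) [IsProbabilityMeasure μ]
    {d : ℕ} (X Y : Ω → (Fin d → ℝ)) (hXm : Measurable X) (hYm : Measurable Y)
    {C : ℝ} (hC : 0 ≤ C) (hXb : ∀ ω, ‖X ω‖ ≤ C) (hYb : ∀ ω, ‖Y ω‖ ≤ C)
    (hdom : ∀ φ : (Fin d → ℝ) → ℝ, ConvexOn ℝ Set.univ φ →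
      ∫ ω, φ (X ω) ∂μ ≤ ∫ ω, φ (Y ω) ∂μ)
    {φ : (Fin d → ℝ) → ℝ} (hφ : StrictConvexOn ℝ Set.univ φ) (hφc : Continuous φ)
    (heq : ∫ ω, φ (X ω) ∂μ = ∫ ω, φ (Y ω) ∂μ)
    (f : (Fin d → ℝ) → ℝ) (hf : Continuous f) :
    ∫ ω, f (Y ω) ∂μ ≤ ∫ ω, f (X ω) ∂μ := by
  classical
  set R : ℝ := C + 1 with hRdef
  have hR : (0:ℝ) ≤ R := by linarith
  have hball : ∀ y : Fin d → ℝ, y ∈ Metric.closedBall (0 : Fin d → ℝ) R ↔ ‖y‖ ≤ R := by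
    intro y; rw [Metric.mem_closedBall, dist_zero_right]
  -- min and max of φ on the ball of radius R
  obtain ⟨zm, hzm, hzmmin⟩ := (isCompact_closedBall (0 : Fin d → ℝ) R).exists_isMinOn
    (Metric.nonempty_closedBall.mpr hR) hφc.continuousOn
  obtain ⟨zM, hzM, hzMmax⟩ := (isCompact_closedBall (0 : Fin d → ℝ) R).exists_isMaxOn
    (Metric.nonempty_closedBall.mpr hR) hφc.continuousOn
  set Lφ : ℝ := φ zM - φ zm with hLφdef
  have hmφ : ∀ y : Fin d → ℝ, ‖y‖ ≤ R → φ zm ≤ φ y := fun y hy =>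
    hzmmin ((hball y).mpr hy)
  have hMφ : ∀ y : Fin d → ℝ, ‖y‖ ≤ R → φ y ≤ φ zM := fun y hy =>
    hzMmax ((hball y).mpr hy)
  have hLφ : 0 ≤ Lφ := by
    have := hmφ zM ((hball zM).mp hzM)
    linarith
  -- subgradients
  choose ℓ hℓ1 hℓ2 using fun x => strict_subgrad hφ hφc x
  have hℓbd : ∀ x : Fin d → ℝ, ‖x‖ ≤ C → ∀ u, |ℓ x u| ≤ Lφ * ‖u‖ := by
    intro x hx
    exact subgrad_norm_bound hx (hℓ1 x) hmφ hMφ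
  -- max of f and |f| on ball R
  obtain ⟨zf, hzf, hzfmax⟩ := (isCompact_closedBall (0 : Fin d → ℝ) R).exists_isMaxOn
    (Metric.nonempty_closedBall.mpr hR) hf.continuousOn
  set M' : ℝ := f zf with hM'def
  have hM' : ∀ y : Fin d → ℝ, ‖y‖ ≤ R → f y ≤ M' := fun y hy => hzfmax ((hball y).mpr hy)
  obtain ⟨za, hza, hzamax⟩ := (isCompact_closedBall (0 : Fin d → ℝ) R).exists_isMaxOn
    (Metric.nonempty_closedBall.mpr hR) hf.abs.continuousOn
  set Babs : ℝ := |f za| with hBadef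
  have hBabs : ∀ y : Fin d → ℝ, ‖y‖ ≤ R → |f y| ≤ Babs := fun y hy => hzamax ((hball y).mpr hy)
  -- the envelopes
  set v : ℕ → (Fin d → ℝ) → ℝ := fun n => env R ((n:ℝ) * Lφ) (fun y => f y - (n:ℝ) * φ y)
    with hvdef
  have hcn : ∀ n : ℕ, Continuous (fun y => f y - (n:ℝ) * φ y) := fun n =>
    hf.sub (continuous_const.mul hφc)
  have hLn : ∀ n : ℕ, (0:ℝ) ≤ (n:ℝ) * Lφ := fun n => mul_nonneg (Nat.cast_nonneg n) hLφ
  -- (a) lower bound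
  have hva : ∀ n : ℕ, ∀ x : Fin d → ℝ, ‖x‖ ≤ R → f x - (n:ℝ) * φ x ≤ v n x := by
    intro n x hx
    exact le_env hR (hLn n) (hcn n) ((hball x).mpr hx)
  -- the special majorant associated with a point x and level c
  have hmaj : ∀ n : ℕ, ∀ x : Fin d → ℝ, ‖x‖ ≤ C → ∀ c : ℝ,
      (∀ y : Fin d → ℝ, ‖y‖ ≤ R → f y - c ≤ (n:ℝ) * (φ y - φ x - ℓ x (y - x))) →
      v n x + (n:ℝ) * φ x ≤ c := by
    intro n x hx c hc
    have hq : ((-(n:ℝ)) • ℓ x, c - (n:ℝ) * φ x + (n:ℝ) * (ℓ x x)) ∈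
        ASet R ((n:ℝ) * Lφ) (fun y => f y - (n:ℝ) * φ y) := by
      constructor
      · intro u
        have h1 : |((-(n:ℝ)) • ℓ x) u| = (n:ℝ) * |ℓ x u| := by
          rw [ContinuousLinearMap.smul_apply, smul_eq_mul, abs_mul, abs_neg, Nat.abs_cast]
        rw [h1]
        calc (n:ℝ) * |ℓ x u| ≤ (n:ℝ) * (Lφ * ‖u‖) :=
              mul_le_mul_of_nonneg_left (hℓbd x hx u) (Nat.cast_nonneg n)
          _ = ((n:ℝ) * Lφ) * ‖u‖ := by ring
      · intro y hy
        have hyR : ‖y‖ ≤ R := (hball y).mp hy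
        have h2 := hc y hyR
        have h3 : ℓ x (y - x) = ℓ x y - ℓ x x := by rw [map_sub]
        simp only [affQ, ContinuousLinearMap.smul_apply, smul_eq_mul]
        rw [h3] at h2
        nlinarith [h2]
    have h4 := env_le hR hq x
    simp only [affQ, ContinuousLinearMap.smul_apply, smul_eq_mul] at h4
    have : v n x ≤ c - (n:ℝ) * φ x := by linarith
    linarith
  -- (c) uniform upper bound
  have hub : ∀ n : ℕ, ∀ x : Fin d → ℝ, ‖x‖ ≤ C → v n x + (n:ℝ) * φ x ≤ M' := by
    intro n x hx
    refine hmaj n x hx M' (fun y hy => ?_)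
    have h1 : f y ≤ M' := hM' y hy
    have h2 : 0 ≤ φ y - φ x - ℓ x (y - x) := by linarith [hℓ1 x y]
    nlinarith [Nat.cast_nonneg (α := ℝ) n]
  -- (d) pointwise convergence
  have hpt : ∀ x : Fin d → ℝ, ‖x‖ ≤ C →
      Tendsto (fun n : ℕ => v n x + (n:ℝ) * φ x) atTop (𝓝 (f x)) := by
    intro x hx
    rw [Metric.tendsto_atTop]
    intro ε hε
    obtain ⟨r, hr, hmod⟩ := Metric.continuous_iff.mp hf x (ε/2) (half_pos hε)
    set S : Set (Fin d → ℝ) := Metric.closedBall (0 : Fin d → ℝ) R ∩ {y | r ≤ dist y x}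
      with hSdef
    have hScompact : IsCompact S :=
      (isCompact_closedBall _ _).inter_right
        (isClosed_le continuous_const (continuous_id.dist continuous_const))
    have hψcont : Continuous (fun y => φ y - φ x - ℓ x (y - x)) := by
      apply (hφc.sub continuous_const).sub
      exact (ℓ x).continuous.comp (continuous_id.sub continuous_const)
    have key : ∃ N : ℕ, ∀ n ≥ N, ∀ y : Fin d → ℝ, ‖y‖ ≤ R →
        f y - (f x + ε/2) ≤ (n:ℝ) * (φ y - φ x - ℓ x (y - x)) := by
      rcases S.eq_empty_or_nonempty with hS | hS
      · refine ⟨0, fun n _ y hy => ?_⟩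
        have hyd : dist y x < r := by
          by_contra hcon
          push_neg at hcon
          exact absurd (by exact ⟨(hball y).mpr hy, hcon⟩ : y ∈ S) (by simp [hS])
        have := hmod y hyd
        rw [Real.dist_eq] at this
        have h2 : 0 ≤ φ y - φ x - ℓ x (y - x) := by linarith [hℓ1 x y]
        have h3 : f y - f x < ε/2 := (abs_lt.mp this).2
        nlinarith [Nat.cast_nonneg (α := ℝ) n]
      · obtain ⟨y₀, hy₀, hy₀min⟩ := hScompact.exists_isMinOn hS hψcont.continuousOn
        set δm : ℝ := φ y₀ - φ x - ℓ x (y₀ - x) with hδmdef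
        have hδm : 0 < δm := by
          have hy₀x : y₀ ≠ x := by
            intro hcontra
            have := hy₀.2
            rw [hcontra] at this
            simp only [Set.mem_setOf_eq, dist_self] at this
            linarith
          have := hℓ2 x y₀ hy₀x
          linarith
        obtain ⟨N, hN⟩ := exists_nat_ge ((M' - f x) / δm)
        refine ⟨N, fun n hn y hy => ?_⟩
        rcases lt_or_ge (dist y x) r with hyd | hyd
        · have := hmod y hyd
          rw [Real.dist_eq] at this
          have h2 : 0 ≤ φ y - φ x - ℓ x (y - x) := by linarith [hℓ1 x y]
          have h3 : f y - f x < ε/2 := (abs_lt.mp this).2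
          nlinarith [Nat.cast_nonneg (α := ℝ) n]
        · have hyS : y ∈ S := ⟨(hball y).mpr hy, hyd⟩
          have h4 : δm ≤ φ y - φ x - ℓ x (y - x) := hy₀min hyS
          have h5 : (M' - f x) ≤ (N:ℝ) * δm := by
            rw [div_le_iff₀ hδm] at hN
            linarith
          have h6 : (N:ℝ) ≤ (n:ℝ) := Nat.cast_le.mpr hn
          have h7 : f y ≤ M' := hM' y hy
          nlinarith [hδm.le, Nat.cast_nonneg (α := ℝ) N]
    obtain ⟨N, hN⟩ := key
    refine ⟨N, fun n hn => ?_⟩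
    have hupp : v n x + (n:ℝ) * φ x ≤ f x + ε/2 := hmaj n x hx (f x + ε/2) (hN n hn)
    have hlow : f x ≤ v n x + (n:ℝ) * φ x := by
      have := hva n x (by linarith : ‖x‖ ≤ R)
      linarith
    rw [Real.dist_eq]
    have habs : |v n x + (n:ℝ) * φ x - f x| ≤ ε/2 := abs_le.mpr ⟨by linarith, by linarith⟩
    linarith
  -- integrability
  have hCR : ∀ (Z : Ω → Fin d → ℝ), (∀ ω, ‖Z ω‖ ≤ C) → ∀ ω, ‖Z ω‖ ≤ R := by
    intro Z hZ ω; linarith [hZ ω]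
  have hintφX : Integrable (fun ω => φ (X ω)) μ := integrable_comp_cont μ hXm hC hXb hφc
  have hintφY : Integrable (fun ω => φ (Y ω)) μ := integrable_comp_cont μ hYm hC hYb hφc
  have hintfX : Integrable (fun ω => f (X ω)) μ := integrable_comp_cont μ hXm hC hXb hf
  have hintfY : Integrable (fun ω => f (Y ω)) μ := integrable_comp_cont μ hYm hC hYb hf
  have hintvX : ∀ n : ℕ, Integrable (fun ω => v n (X ω)) μ := fun n =>
    integrable_comp_cont μ hXm hC hXb (env_continuous hR (hLn n) (hcn n))
  have hintvY : ∀ n : ℕ, Integrable (fun ω => v n (Y ω)) μ := fun n =>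
    integrable_comp_cont μ hYm hC hYb (env_continuous hR (hLn n) (hcn n))
  -- step 3 : ∫ v n ∘ Y ≤ ∫ v n ∘ X
  have step3 : ∀ n : ℕ, ∫ ω, v n (Y ω) ∂μ ≤ ∫ ω, v n (X ω) ∂μ := by
    intro n
    have hconc : ConvexOn ℝ Set.univ (fun x => -(v n x)) := by
      have h0 := (env_concave hR (hLn n) (hcn n)).neg
      rw [Pi.neg_def] at h0
      exact h0
    have h1 := hdom _ hconc
    simp only [integral_neg] at h1
    linarith
  -- chain
  have chain : ∀ n : ℕ, ∫ ω, f (Y ω) ∂μ ≤ ∫ ω, (v n (X ω) + (n:ℝ) * φ (X ω)) ∂μ := by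
    intro n
    have step1 : ∫ ω, f (Y ω) ∂μ ≤ ∫ ω, (v n (Y ω) + (n:ℝ) * φ (Y ω)) ∂μ := by
      apply integral_mono hintfY ((hintvY n).add (hintφY.const_mul _))
      intro ω
      have := hva n (Y ω) (hCR Y hYb ω)
      simp only [Pi.add_apply]
      linarith
    have e2 : ∫ ω, (v n (Y ω) + (n:ℝ) * φ (Y ω)) ∂μ
        = ∫ ω, v n (Y ω) ∂μ + (n:ℝ) * ∫ ω, φ (Y ω) ∂μ := by
      rw [integral_add (hintvY n) (hintφY.const_mul _), integral_const_mul]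
    have e4 : ∫ ω, (v n (X ω) + (n:ℝ) * φ (X ω)) ∂μ
        = ∫ ω, v n (X ω) ∂μ + (n:ℝ) * ∫ ω, φ (X ω) ∂μ := by
      rw [integral_add (hintvX n) (hintφX.const_mul _), integral_const_mul]
    rw [e4]
    rw [e2] at step1
    have := step3 n
    rw [← heq] at step1
    linarith
  -- dominated convergence
  have hdct : Tendsto (fun n : ℕ => ∫ ω, (v n (X ω) + (n:ℝ) * φ (X ω)) ∂μ) atTop
      (𝓝 (∫ ω, f (X ω) ∂μ)) := by
    refine tendsto_integral_of_dominated_convergence (fun _ => |M'| + Babs)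
      (fun n => ((hintvX n).add (hintφX.const_mul _)).aestronglyMeasurable)
      (integrable_const _) (fun n => ?_) ?_
    · filter_upwards with ω
      rw [Real.norm_eq_abs, abs_le]
      have h1 := hub n (X ω) (hXb ω)
      have h2 : f (X ω) ≤ v n (X ω) + (n:ℝ) * φ (X ω) := by
        have := hva n (X ω) (hCR X hXb ω)
        linarith
      have h3 := hBabs (X ω) (hCR X hXb ω)
      have h4 := abs_le.mp h3
      constructor
      · have : -Babs ≤ f (X ω) := by linarith [h4.1]
        have h5 : (0:ℝ) ≤ |M'| := abs_nonneg _
        linarith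
      · have h6 : M' ≤ |M'| := le_abs_self _
        have h7 : (0:ℝ) ≤ Babs := (abs_nonneg _).trans h3
        linarith
    · filter_upwards with ω
      exact hpt (X ω) (hXb ω)
  exact ge_of_tendsto' hdct chain

/-- if X dominates Y in the concave order and the laws differ,
then every strictly convex continuous function has strictly smaller expectation at X. -/
theorem stmt2 {Ω : Type*} [MeasurableSpace Ω] (μ : Measure Ω) [IsProbabilityMeasure μ]
    {d : ℕ} (X Y : Ω → (Fin d → ℝ))
    (hXm : Measurable X) (hYm : Measurable Y)
    (hXb : ∃ C, ∀ ω, ‖X ω‖ ≤ C) (hYb : ∃ C, ∀ ω, ‖Y ω‖ ≤ C)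
    (hdom : ∀ φ : (Fin d → ℝ) → ℝ, ConvexOn ℝ Set.univ φ →
      ∫ ω, φ (X ω) ∂μ ≤ ∫ ω, φ (Y ω) ∂μ)
    (hneq : μ.map X ≠ μ.map Y) :
    ∀ φ : (Fin d → ℝ) → ℝ, StrictConvexOn ℝ Set.univ φ → Continuous φ →
      ∫ ω, φ (X ω) ∂μ < ∫ ω, φ (Y ω) ∂μ := by
  intro φ hφ hφc
  have hle := hdom φ hφ.convexOn
  rcases hle.lt_or_eq with hlt | heq
  · exact hlt
  · exfalso
    apply hneq
    obtain ⟨C₀, hC₀⟩ := hXb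
    obtain ⟨C₁, hC₁⟩ := hYb
    set C : ℝ := max (max C₀ C₁) 0 with hCdef
    have hC : (0:ℝ) ≤ C := le_max_right _ _
    have hXb' : ∀ ω, ‖X ω‖ ≤ C := fun ω =>
      (hC₀ ω).trans ((le_max_left _ _).trans (le_max_left _ _))
    have hYb' : ∀ ω, ‖Y ω‖ ≤ C := fun ω =>
      (hC₁ ω).trans ((le_max_right _ _).trans (le_max_left _ _))
    have key : ∀ g : (Fin d → ℝ) → ℝ, Continuous g →
        ∫ ω, g (Y ω) ∂μ ≤ ∫ ω, g (X ω) ∂μ := fun g hg =>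
      key_ineq μ X Y hXm hYm hC hXb' hYb' hdom hφ hφc heq g hg
    have keyeq : ∀ g : (Fin d → ℝ) → ℝ, Continuous g →
        ∫ ω, g (X ω) ∂μ = ∫ ω, g (Y ω) ∂μ := by
      intro g hg
      refine le_antisymm ?_ (key g hg)
      have h2 := key (fun x => -(g x)) hg.neg
      simp only [integral_neg] at h2
      linarith
    haveI : IsProbabilityMeasure (μ.map X) := Measure.isProbabilityMeasure_map hXm.aemeasurable
    haveI : IsProbabilityMeasure (μ.map Y) := Measure.isProbabilityMeasure_map hYm.aemeasurable
    apply ext_of_forall_lintegral_eq_of_IsFiniteMeasure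
    intro f
    have hfm : Measurable fun x : Fin d → ℝ => ((f x : ℝ≥0) : ℝ≥0∞) :=
      measurable_coe_nnreal_ennreal.comp f.continuous.measurable
    rw [lintegral_map hfm hXm, lintegral_map hfm hYm]
    have hg : Continuous (fun x : Fin d → ℝ => (f x : ℝ)) :=
      NNReal.continuous_coe.comp f.continuous
    rw [lintegral_coe_eq_integral _ (integrable_comp_cont μ hXm hC hXb' hg),
      lintegral_coe_eq_integral _ (integrable_comp_cont μ hYm hC hYb' hg)]
    exact congrArg ENNReal.ofReal (keyeq _ hg)
end

section
/- For bounded R^d-valued random vectors X and Y, the following are equivalent: (1) X ⪰ Y and E[φ(X)] < E[φ(Y)] for SOME convex φ; (2) X ⪰ Y and L(X) ≠ L(Y); (3) X ⪰ Y and E[φ(X)] < E[φ(Y)] for EVERY strictly convex continuous φ. -/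
open MeasureTheory

/-- Concave-order dominance: X ⪰ Y iff E[φ(X)] ≤ E[φ(Y)] for every convex φ. -/
def ConcaveDom {Ω : Type*} [MeasurableSpace Ω] (μ : Measure Ω) {d : ℕ}
    (X Y : Ω → (Fin d → ℝ)) : Prop :=
  ∀ φ : (Fin d → ℝ) → ℝ, ConvexOn ℝ Set.univ φ →
    ∫ ω, φ (X ω) ∂μ ≤ ∫ ω, φ (Y ω) ∂μ

namespace StrictDomAux

open Metric Set Filter Topology

variable {d : ℕ}


lemma integrable_comp {Ω : Type*} [MeasurableSpace Ω] (μ : Measure Ω) [IsProbabilityMeasure μ]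
    {X : Ω → (Fin d → ℝ)} (hXm : Measurable X) {C : ℝ} (hXb : ∀ ω, ‖X ω‖ ≤ C)
    {g : (Fin d → ℝ) → ℝ} (hg : Continuous g) :
    Integrable (fun ω => g (X ω)) μ := by
  obtain ⟨B, hB⟩ :=
    (isCompact_closedBall (0 : Fin d → ℝ) C).exists_bound_of_continuousOn hg.continuousOn
  refine (integrable_const B).mono' (hg.measurable.comp hXm).aestronglyMeasurable ?_
  refine Filter.Eventually.of_forall (fun ω => ?_)
  exact hB (X ω) (by simpa [Metric.mem_closedBall, dist_zero_right] using hXb ω)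

lemma exists_subgrad {φ : (Fin d → ℝ) → ℝ} (hφ : ConvexOn ℝ Set.univ φ) (x : Fin d → ℝ) :
    ∃ l : (Fin d → ℝ) →L[ℝ] ℝ, ∀ z, φ x + l (z - x) ≤ φ z := by
  have hc : Continuous φ := hφ.locallyLipschitz.continuous
  set t : Set ((Fin d → ℝ) × ℝ) := {p | φ p.1 < p.2} with ht
  have htop : IsOpen t := isOpen_lt (hc.comp continuous_fst) continuous_snd
  have htconv : Convex ℝ t := by
    rintro ⟨z1, s1⟩ hz1 ⟨z2, s2⟩ hz2 a b ha hb hab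
    simp only [ht, mem_setOf_eq] at hz1 hz2 ⊢
    have h2 := hφ.2 (mem_univ z1) (mem_univ z2) ha hb hab
    have key : a * φ z1 + b * φ z2 < a * s1 + b * s2 := by
      rcases eq_or_lt_of_le ha with h | h
      · have hb1 : b = 1 := by linarith
        rw [← h, hb1]; simpa using hz2
      · have k1 : a * φ z1 < a * s1 := by nlinarith
        have k2 : b * φ z2 ≤ b * s2 := by nlinarith
        linarith
    exact lt_of_le_of_lt h2 key
  have hdisj : ((x, φ x) : (Fin d → ℝ) × ℝ) ∉ t := by simp [ht]
  obtain ⟨f, hf⟩ := geometric_hahn_banach_point_open htconv htop hdisj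
  set β := f ((0 : Fin d → ℝ), (1:ℝ)) with hβ
  have hsplit : ∀ (z : Fin d → ℝ) (s : ℝ), f (z, s) = f (z, 0) + s * β := by
    intro z s
    have h0 : ((z, s) : (Fin d → ℝ) × ℝ) = (z, (0:ℝ)) + s • ((0 : Fin d → ℝ), (1:ℝ)) := by
      simp [Prod.ext_iff]
    rw [h0, f.map_add, f.map_smul, smul_eq_mul, hβ]
  have hβpos : 0 < β := by
    have h1 := hf (x, φ x + 1) (by simp [ht])
    rw [hsplit x (φ x + 1), hsplit x (φ x)] at h1; linarith
  have hineq : ∀ z, f (x,0) + φ x * β ≤ f (z, 0) + φ z * β := by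
    intro z
    have h2 : ∀ ε > (0:ℝ), f (x,0) + φ x * β < f (z,0) + (φ z + ε) * β := by
      intro ε hε
      have h3 := hf (z, φ z + ε) (by simp [ht]; linarith)
      rw [hsplit z (φ z + ε), hsplit x (φ x)] at h3
      exact h3
    by_contra hcon
    push_neg at hcon
    have hpos : (0:ℝ) < f (x,0) + φ x * β - (f (z,0) + φ z * β) := by linarith
    have h4 := h2 ((f (x,0) + φ x * β - (f (z,0) + φ z * β)) / β) (by positivity)
    have hβne : β ≠ 0 := ne_of_gt hβpos
    field_simp at h4
    nlinarith
  refine ⟨(-β⁻¹ : ℝ) • (f.comp (ContinuousLinearMap.inl ℝ (Fin d → ℝ) ℝ)), fun z => ?_⟩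
  have h5 := hineq z
  have h6 : ((-β⁻¹ : ℝ) • (f.comp (ContinuousLinearMap.inl ℝ (Fin d → ℝ) ℝ))) (z - x)
      = -β⁻¹ * (f (z, 0) - f (x, 0)) := by
    have h7 : ((ContinuousLinearMap.inl ℝ (Fin d → ℝ) ℝ) (z - x)) = ((z,0) : (Fin d → ℝ) × ℝ) - (x, 0) := by
      simp [Prod.ext_iff]
    rw [ContinuousLinearMap.smul_apply, ContinuousLinearMap.comp_apply, h7, f.map_sub]
    simp [smul_eq_mul]
  rw [h6]
  have hβne : β ≠ 0 := ne_of_gt hβpos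
  have hβinv : 0 < β⁻¹ := by positivity
  have hb1 : β⁻¹ * β = 1 := inv_mul_cancel₀ hβne
  have h8 : (φ x - φ z) * β ≤ f (z,0) - f (x,0) := by linarith
  have key : φ x - φ z ≤ β⁻¹ * (f (z,0) - f (x,0)) := by
    calc φ x - φ z = β⁻¹ * ((φ x - φ z) * β) := by field_simp
    _ ≤ β⁻¹ * (f (z,0) - f (x,0)) := mul_le_mul_of_nonneg_left h8 hβinv.le
  linarith


lemma strict_subgrad {φ : (Fin d → ℝ) → ℝ} (hφ : StrictConvexOn ℝ Set.univ φ)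
    {x : Fin d → ℝ} {l : (Fin d → ℝ) →L[ℝ] ℝ} (hl : ∀ z, φ x + l (z - x) ≤ φ z)
    {y : Fin d → ℝ} (hxy : y ≠ x) : φ x + l (y - x) < φ y := by
  rcases lt_or_ge (φ x + l (y - x)) (φ y) with h | h
  · exact h
  have heq : φ y = φ x + l (y - x) := le_antisymm h (hl y)
  have hmid := hφ.2 (mem_univ x) (mem_univ y) (Ne.symm hxy) (by norm_num : (0:ℝ) < 1/2)
    (by norm_num : (0:ℝ) < 1/2) (by norm_num)
  have hcombo : ((1/2 : ℝ) • x + (1/2 : ℝ) • y) - x = (1/2 : ℝ) • (y - x) := by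
    module
  have hl2 := hl ((1/2 : ℝ) • x + (1/2 : ℝ) • y)
  rw [hcombo, l.map_smul, smul_eq_mul] at hl2
  rw [heq] at hmid
  rw [smul_eq_mul, smul_eq_mul] at hmid
  linarith

lemma subgrad_norm_le {φ : (Fin d → ℝ) → ℝ} {R B : ℝ}
    (hB : ∀ y : Fin d → ℝ, ‖y‖ ≤ R + 1 → |φ y| ≤ B)
    {x : Fin d → ℝ} (hx : ‖x‖ ≤ R) (hR : 0 ≤ R)
    {l : (Fin d → ℝ) →L[ℝ] ℝ} (hl : ∀ z, φ x + l (z - x) ≤ φ z) : ‖l‖ ≤ 2 * B := by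
  have hB0 : 0 ≤ B := le_trans (abs_nonneg _) (hB x (by linarith))
  refine ContinuousLinearMap.opNorm_le_bound _ (by linarith) (fun e => ?_)
  rcases eq_or_ne e 0 with rfl | he
  · simp
  have hen : 0 < ‖e‖ := norm_pos_iff.mpr he
  set u := (‖e‖⁻¹ : ℝ) • e with hu
  have hun : ‖u‖ = 1 := by
    rw [hu, norm_smul]; simp [abs_of_pos (inv_pos.mpr hen)]
    field_simp
  have key : ∀ v : Fin d → ℝ, ‖v‖ = 1 → l v ≤ 2 * B := by
    intro v hv
    have h1 := hl (x + v)
    have h2 : l ((x + v) - x) = l v := by congr 1; abel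
    rw [h2] at h1
    have h3 : |φ (x + v)| ≤ B := hB _ (by
      calc ‖x + v‖ ≤ ‖x‖ + ‖v‖ := norm_add_le _ _
      _ ≤ R + 1 := by rw [hv]; linarith)
    have h4 : |φ x| ≤ B := hB x (by linarith)
    have := abs_le.mp h3
    have := abs_le.mp h4
    linarith
  have habs : |l u| ≤ 2 * B := by
    rcases abs_cases (l u) with ⟨h, _⟩ | ⟨h, _⟩
    · rw [h]; exact key u hun
    · rw [h]
      have : l (-u) ≤ 2 * B := key (-u) (by rw [norm_neg, hun])
      rw [l.map_neg] at this; linarith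
  have heu : e = ‖e‖ • u := by rw [hu, smul_smul]; field_simp; rw [one_smul]
  have hle : l e = ‖e‖ * l u := by
    conv_lhs => rw [heu]
    rw [l.map_smul, smul_eq_mul]
  calc ‖l e‖ = |l e| := rfl
  _ = ‖e‖ * |l u| := by rw [hle, abs_mul, abs_of_pos hen]
  _ ≤ ‖e‖ * (2 * B) := by nlinarith
  _ = 2 * B * ‖e‖ := by ring

lemma gap_pos {φ : (Fin d → ℝ) → ℝ} (hφ : StrictConvexOn ℝ Set.univ φ) (hφc : Continuous φ)
    (R M r : ℝ) (hr : 0 < r) :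
    ∃ m > 0, ∀ (x y : Fin d → ℝ) (l : (Fin d → ℝ) →L[ℝ] ℝ), ‖x‖ ≤ R → ‖y - x‖ = r → ‖l‖ ≤ M →
      (∀ z, φ x + l (z - x) ≤ φ z) → m ≤ φ y - φ x - l (y - x) := by
  set D : Set ((Fin d → ℝ) × (Fin d → ℝ) × ((Fin d → ℝ) →L[ℝ] ℝ)) :=
    {p | ‖p.1‖ ≤ R ∧ ‖p.2.1 - p.1‖ = r ∧ ‖p.2.2‖ ≤ M ∧ ∀ z, φ p.1 + p.2.2 (z - p.1) ≤ φ z}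
    with hD
  by_cases hne : D.Nonempty
  · have hDc : IsCompact D := by
      have hsub : D ⊆ (closedBall 0 R) ×ˢ ((closedBall 0 (R + r)) ×ˢ (closedBall 0 M)) := by
        rintro ⟨x, y, l⟩ ⟨h1, h2, h3, _⟩
        refine ⟨by simpa [mem_closedBall, dist_zero_right] using h1, ?_, by
          simpa [mem_closedBall, dist_zero_right] using h3⟩
        simp only [mem_closedBall, dist_zero_right]
        calc ‖y‖ = ‖(y - x) + x‖ := by rw [sub_add_cancel]
        _ ≤ ‖y - x‖ + ‖x‖ := norm_add_le _ _
        _ ≤ R + r := by rw [h2]; linarith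
      refine IsCompact.of_isClosed_subset
        ((isCompact_closedBall _ _).prod ((isCompact_closedBall _ _).prod
          (isCompact_closedBall _ _))) ?_ hsub
      have c1 : IsClosed {p : (Fin d → ℝ) × (Fin d → ℝ) × ((Fin d → ℝ) →L[ℝ] ℝ) | ‖p.1‖ ≤ R} :=
        isClosed_le continuous_fst.norm continuous_const
      have c2 : IsClosed {p : (Fin d → ℝ) × (Fin d → ℝ) × ((Fin d → ℝ) →L[ℝ] ℝ) |
          ‖p.2.1 - p.1‖ = r} :=
        isClosed_eq ((continuous_snd.fst).sub continuous_fst).norm continuous_const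
      have c3 : IsClosed {p : (Fin d → ℝ) × (Fin d → ℝ) × ((Fin d → ℝ) →L[ℝ] ℝ) | ‖p.2.2‖ ≤ M} :=
        isClosed_le continuous_snd.snd.norm continuous_const
      have c4 : IsClosed {p : (Fin d → ℝ) × (Fin d → ℝ) × ((Fin d → ℝ) →L[ℝ] ℝ) |
          ∀ z, φ p.1 + p.2.2 (z - p.1) ≤ φ z} := by
        have : {p : (Fin d → ℝ) × (Fin d → ℝ) × ((Fin d → ℝ) →L[ℝ] ℝ) |
            ∀ z, φ p.1 + p.2.2 (z - p.1) ≤ φ z} =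
            ⋂ z, {p : (Fin d → ℝ) × (Fin d → ℝ) × ((Fin d → ℝ) →L[ℝ] ℝ) |
              φ p.1 + p.2.2 (z - p.1) ≤ φ z} := by
          ext p; simp
        rw [this]
        refine isClosed_iInter (fun z => isClosed_le ?_ continuous_const)
        exact ((hφc.comp continuous_fst).add
          (continuous_snd.snd.clm_apply (continuous_const.sub continuous_fst)))
      exact c1.inter (c2.inter (c3.inter c4))
    obtain ⟨p0, hp0D, hp0min⟩ := hDc.exists_isMinOn hne
      (Continuous.continuousOn (by
        exact ((hφc.comp continuous_snd.fst).sub (hφc.comp continuous_fst)).sub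
          (continuous_snd.snd.clm_apply (continuous_snd.fst.sub continuous_fst))))
    rw [isMinOn_iff] at hp0min
    obtain ⟨h1, h2, h3, h4⟩ := hp0D
    have hxy : p0.2.1 ≠ p0.1 := by
      intro h
      rw [h] at h2; simp at h2; linarith
    have hpos : 0 < φ p0.2.1 - φ p0.1 - p0.2.2 (p0.2.1 - p0.1) := by
      have := strict_subgrad hφ h4 hxy
      linarith
    exact ⟨_, hpos, fun x y l k1 k2 k3 k4 => hp0min (x, y, l) ⟨k1, k2, k3, k4⟩⟩
  · refine ⟨1, one_pos, fun x y l k1 k2 k3 k4 => absurd ⟨(x, y, l), ⟨k1, k2, k3, k4⟩⟩ hne⟩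


lemma map_eq_of_lip {Ω : Type*} [MeasurableSpace Ω] (μ : Measure Ω) [IsProbabilityMeasure μ]
    {X Y : Ω → (Fin d → ℝ)} (hXm : Measurable X) (hYm : Measurable Y)
    (h : ∀ (f : (Fin d → ℝ) → ℝ) (L : NNReal), LipschitzWith L f → (∀ y, |f y| ≤ 1) →
      ∫ ω, f (X ω) ∂μ = ∫ ω, f (Y ω) ∂μ) :
    μ.map X = μ.map Y := by
  have key : ∀ F : Set (Fin d → ℝ), IsClosed F → μ (X ⁻¹' F) = μ (Y ⁻¹' F) := by
    intro F hF
    rcases eq_empty_or_nonempty F with rfl | hFne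
    · simp
    set f : ℕ → (Fin d → ℝ) → ℝ := fun n y => max (1 - n * infDist y F) 0 with hf
    have hlip : ∀ n : ℕ, LipschitzWith n (f n) := by
      intro n
      have l1 : LipschitzWith (n : NNReal) (fun y : Fin d → ℝ => 1 - (n : ℝ) * infDist y F) := by
        apply LipschitzWith.of_dist_le_mul
        intro a b
        have h2 := (lipschitz_infDist_pt F).dist_le_mul a b
        simp only [NNReal.coe_one, one_mul] at h2
        rw [Real.dist_eq] at h2 ⊢
        have : (1 - (n:ℝ) * infDist a F) - (1 - (n:ℝ) * infDist b F)
            = -((n:ℝ) * (infDist a F - infDist b F)) := by ring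
        rw [this, abs_neg, abs_mul, abs_of_nonneg (Nat.cast_nonneg n)]
        push_cast
        exact mul_le_mul_of_nonneg_left h2 (Nat.cast_nonneg n)
      exact l1.max_const 0
    have hbd : ∀ n (y : Fin d → ℝ), |f n y| ≤ 1 := by
      intro n y
      rw [abs_le]
      constructor
      · simp [hf]
      · simp only [hf]
        apply max_le _ zero_le_one
        have h4 : 0 ≤ (n:ℝ) * infDist y F :=
          mul_nonneg (Nat.cast_nonneg n) infDist_nonneg
        linarith
    have hcont : ∀ n, Continuous (f n) := fun n => (hlip n).continuous
    have hDCT : ∀ (Z : Ω → (Fin d → ℝ)), Measurable Z →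
        Tendsto (fun n => ∫ ω, f n (Z ω) ∂μ) atTop (𝓝 ((μ (Z ⁻¹' F)).toReal)) := by
      intro Z hZm
      have h0 : ∫ ω, (Z ⁻¹' F).indicator (fun _ => (1:ℝ)) ω ∂μ = (μ (Z ⁻¹' F)).toReal :=
        integral_indicator_one (hZm hF.measurableSet)
      rw [← h0]
      apply tendsto_integral_of_dominated_convergence (fun _ => (1:ℝ))
      · exact fun n => ((hcont n).measurable.comp hZm).aestronglyMeasurable
      · exact integrable_const 1
      · exact fun n => Eventually.of_forall (fun ω => by
          rw [Real.norm_eq_abs]; exact hbd n (Z ω))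
      · refine Eventually.of_forall (fun ω => ?_)
        by_cases hmem : Z ω ∈ F
        · have : ∀ n, f n (Z ω) = 1 := by
            intro n; simp [hf, infDist_zero_of_mem hmem]
          rw [show (Z ⁻¹' F).indicator (fun _ => (1:ℝ)) ω = 1 by simp [hmem]]
          simp_rw [this]
          exact tendsto_const_nhds
        · have hδ : 0 < infDist (Z ω) F := (hF.notMem_iff_infDist_pos hFne).mp hmem
          rw [show (Z ⁻¹' F).indicator (fun _ => (1:ℝ)) ω = 0 by simp [hmem]]
          apply tendsto_atTop_of_eventually_const (i₀ := ⌈(infDist (Z ω) F)⁻¹⌉₊)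
          intro n hn
          have hn' : (infDist (Z ω) F)⁻¹ ≤ (n : ℝ) :=
            le_trans (Nat.le_ceil _) (by exact_mod_cast hn)
          have : 1 - (n:ℝ) * infDist (Z ω) F ≤ 0 := by
            have h3 : (1:ℝ) ≤ (n:ℝ) * infDist (Z ω) F := by
              rw [← inv_mul_cancel₀ (ne_of_gt hδ)]
              exact mul_le_mul_of_nonneg_right hn' hδ.le
            linarith
          simp [hf, max_eq_right this]
    have hXlim := hDCT X hXm
    have hYlim := hDCT Y hYm
    have heqseq : (fun n => ∫ ω, f n (X ω) ∂μ) = fun n => ∫ ω, f n (Y ω) ∂μ := by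
      funext n; exact h (f n) n (hlip n) (hbd n)
    rw [heqseq] at hXlim
    have := tendsto_nhds_unique hXlim hYlim
    exact (ENNReal.toReal_eq_toReal_iff' (measure_ne_top μ _) (measure_ne_top μ _)).mp this
  haveI : IsProbabilityMeasure (μ.map X) := Measure.isProbabilityMeasure_map hXm.aemeasurable
  haveI : IsProbabilityMeasure (μ.map Y) := Measure.isProbabilityMeasure_map hYm.aemeasurable
  refine ext_of_generate_finite {s : Set (Fin d → ℝ) | IsClosed s}
    (BorelSpace.measurable_eq.trans borel_eq_generateFrom_isClosed) isPiSystem_isClosed ?_ ?_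
  · intro s hs
    rw [Measure.map_apply hXm hs.measurableSet, Measure.map_apply hYm hs.measurableSet]
    exact key s hs
  · simp
set_option maxHeartbeats 1000000 in
lemma L5core {Ω : Type*} [MeasurableSpace Ω] (μ : Measure Ω) [IsProbabilityMeasure μ]
    {X Y : Ω → (Fin d → ℝ)} (hXm : Measurable X) (hYm : Measurable Y)
    {R : ℝ} (hR0 : 0 ≤ R) (hXK : ∀ ω, ‖X ω‖ ≤ R) (hYK : ∀ ω, ‖Y ω‖ ≤ R)
    (hdom : ∀ g : (Fin d → ℝ) → ℝ, ConvexOn ℝ Set.univ g →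
      ∫ ω, g (X ω) ∂μ ≤ ∫ ω, g (Y ω) ∂μ)
    {φ : (Fin d → ℝ) → ℝ} (hφs : StrictConvexOn ℝ Set.univ φ) (hφc : Continuous φ)
    (heq : ∫ ω, φ (X ω) ∂μ = ∫ ω, φ (Y ω) ∂μ)
    {f : (Fin d → ℝ) → ℝ} {Lf : NNReal} (hfl : LipschitzWith Lf f) (hfb : ∀ y, |f y| ≤ 1) :
    ∫ ω, f (X ω) ∂μ ≤ ∫ ω, f (Y ω) ∂μ := by
  have hfc : Continuous f := hfl.continuous
  -- subgradient selection
  have hsel := fun x => exists_subgrad hφs.convexOn x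
  choose l hl using hsel
  -- uniform bound on subgradients over the ball
  obtain ⟨B, hB⟩ := (isCompact_closedBall (0 : Fin d → ℝ) (R+1)).exists_bound_of_continuousOn
    hφc.continuousOn
  have hB' : ∀ y : Fin d → ℝ, ‖y‖ ≤ R + 1 → |φ y| ≤ B := fun y hy =>
    hB y (by simpa [mem_closedBall, dist_zero_right] using hy)
  set M := 2 * B with hM
  have hMl : ∀ x : Fin d → ℝ, ‖x‖ ≤ R → ‖l x‖ ≤ M := fun x hx =>
    subgrad_norm_le hB' hx hR0 (hl x)
  have hB0 : 0 ≤ B := le_trans (abs_nonneg _) (hB' 0 (by simp; linarith))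
  -- main estimate for every ε
  have main : ∀ ε : ℝ, 0 < ε → ∫ ω, f (X ω) ∂μ ≤ ∫ ω, f (Y ω) ∂μ + ε := by
    intro ε hε
    set L : ℝ := (Lf : ℝ) + 1 with hLdef
    have hL : 0 < L := by positivity
    set r : ℝ := ε / L with hrdef
    have hr : 0 < r := by positivity
    obtain ⟨m, hm, hgap⟩ := gap_pos hφs hφc R M r hr
    set t : ℝ := m / 3 with htdef
    have ht : 0 < t := by positivity
    set A : (Fin d → ℝ) → (Fin d → ℝ) → ℝ :=
      fun x y => φ x + l x (y - x) + t * f x - t * ε with hA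
    have key1 : ∀ x : Fin d → ℝ, ‖x‖ ≤ R → ∀ y, A x y ≤ φ y + t * f y := by
      intro x hx y
      have hsub := hl x y
      rcases le_or_gt ‖y - x‖ r with hclose | hfar
      · have hd1 : |f x - f y| ≤ (Lf : ℝ) * ‖y - x‖ := by
          have := hfl.dist_le_mul x y
          rw [Real.dist_eq, dist_eq_norm, norm_sub_rev] at this
          exact this
        have hd2 : f x - f y ≤ L * r := by
          have h5 : (Lf:ℝ) * ‖y - x‖ ≤ L * r := by
            have hLfL : (Lf:ℝ) ≤ L := by rw [hLdef]; linarith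
            apply mul_le_mul hLfL hclose (norm_nonneg _) hL.le
          linarith [(abs_le.mp hd1).2]
        have hLr : L * r = ε := by
          rw [hrdef]; field_simp
        rw [hLr] at hd2
        have : t * f x - t * f y ≤ t * ε := by nlinarith
        simp only [hA]; linarith
      · -- far case
        set n : ℝ := ‖y - x‖ with hn
        have hn0 : 0 < n := lt_trans hr hfar
        set θ : ℝ := r / n with hθ
        have hθ0 : 0 < θ := by positivity
        have hθ1 : θ ≤ 1 := by
          rw [hθ, div_le_one hn0]; exact hfar.le
        set y' := x + θ • (y - x) with hy'
        have hy'r : ‖y' - x‖ = r := by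
          rw [hy']
          simp only [add_sub_cancel_left]
          rw [norm_smul, Real.norm_eq_abs, abs_of_pos hθ0, hθ]
          field_simp
          rfl
        have hgap' := hgap x y' (l x) hx hy'r (hMl x hx) (hl x)
        have hcomb : y' = (1 - θ) • x + θ • y := by rw [hy']; module
        have hconv : φ y' ≤ (1 - θ) * φ x + θ * φ y := by
          rw [hcomb]
          exact hφs.convexOn.2 (mem_univ x) (mem_univ y) (by linarith) hθ0.le (by ring)
        have hlin : l x (y' - x) = θ * l x (y - x) := by
          rw [hy']
          simp only [add_sub_cancel_left]
          rw [(l x).map_smul, smul_eq_mul]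
        have hGpos : 0 ≤ φ y - φ x - l x (y - x) := by linarith [hl x y]
        have hmG : m ≤ φ y - φ x - l x (y - x) := by
          have h6 : m ≤ θ * (φ y - φ x - l x (y - x)) := by
            rw [hlin] at hgap'; nlinarith
          nlinarith
        have hfd : t * f x - t * f y ≤ 2 * t := by
          have := abs_le.mp (hfb x)
          have := abs_le.mp (hfb y)
          nlinarith
        simp only [hA]
        have h2t : 2 * t ≤ m := by rw [htdef]; linarith
        have htε : 0 < t * ε := by positivity
        linarith
    -- the convex minorant F
    have hKne : (closedBall (0 : Fin d → ℝ) R).Nonempty := ⟨0, mem_closedBall_self hR0⟩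
    have hbdd : ∀ y : Fin d → ℝ, BddAbove ((fun x => A x y) '' closedBall 0 R) := by
      intro y
      refine ⟨φ y + t * f y, ?_⟩
      rintro _ ⟨x, hx, rfl⟩
      exact key1 x (by simpa [mem_closedBall, dist_zero_right] using hx) y
    set F : (Fin d → ℝ) → ℝ := fun y => sSup ((fun x => A x y) '' closedBall 0 R) with hF
    have hFle : ∀ y, F y ≤ φ y + t * f y := by
      intro y
      apply csSup_le (hKne.image _)
      rintro _ ⟨x, hx, rfl⟩
      exact key1 x (by simpa [mem_closedBall, dist_zero_right] using hx) y
    have hFge : ∀ x : Fin d → ℝ, ‖x‖ ≤ R → φ x + t * f x - t * ε ≤ F x := by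
      intro x hx
      have hxmem : x ∈ closedBall (0 : Fin d → ℝ) R := by
        simpa [mem_closedBall, dist_zero_right] using hx
      have : A x x = φ x + t * f x - t * ε := by
        simp [hA]
      rw [← this]
      exact le_csSup (hbdd x) ⟨x, hxmem, rfl⟩
    have hFconv : ConvexOn ℝ Set.univ F := by
      refine ⟨convex_univ, fun y1 _ y2 _ a b ha hb hab => ?_⟩
      apply csSup_le (hKne.image _)
      rintro _ ⟨x, hx, rfl⟩
      have hxR : ‖x‖ ≤ R := by simpa [mem_closedBall, dist_zero_right] using hx
      have hAaff : A x (a • y1 + b • y2) = a * A x y1 + b * A x y2 := by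
        have hcomb2 : (a • y1 + b • y2) - x = a • (y1 - x) + b • (y2 - x) := by
          have h7 : a • (y1 - x) + b • (y2 - x) = a • y1 + b • y2 - (a + b) • x := by module
          rw [h7, hab, one_smul]
        simp only [hA, hcomb2, map_add, _root_.map_smul, smul_eq_mul]
        linear_combination (φ x + t * f x - t * ε) * hab.symm
      show A x (a • y1 + b • y2) ≤ a • F y1 + b • F y2
      rw [hAaff, smul_eq_mul, smul_eq_mul]
      have h8 : A x y1 ≤ F y1 := le_csSup (hbdd y1) ⟨x, hx, rfl⟩
      have h9 : A x y2 ≤ F y2 := le_csSup (hbdd y2) ⟨x, hx, rfl⟩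
      have := mul_le_mul_of_nonneg_left h8 ha
      have := mul_le_mul_of_nonneg_left h9 hb
      linarith
    have hFlipb : ∀ y z : Fin d → ℝ, F y ≤ F z + M * ‖y - z‖ := by
      intro y z
      apply csSup_le (hKne.image _)
      rintro _ ⟨x, hx, rfl⟩
      have hxR : ‖x‖ ≤ R := by simpa [mem_closedBall, dist_zero_right] using hx
      have h10 : A x y = A x z + l x (y - z) := by
        simp only [hA]
        have : (y - x) = (z - x) + (y - z) := by abel
        rw [this, map_add]; ring
      have h11 : l x (y - z) ≤ M * ‖y - z‖ := by
        calc l x (y - z) ≤ |l x (y - z)| := le_abs_self _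
        _ ≤ ‖l x‖ * ‖y - z‖ := (l x).le_opNorm _
        _ ≤ M * ‖y - z‖ := mul_le_mul_of_nonneg_right (hMl x hxR) (norm_nonneg _)
      have h12 : A x z ≤ F z := le_csSup (hbdd z) ⟨x, hx, rfl⟩
      linarith
    have hFcont : Continuous F := by
      have hM0 : 0 ≤ M := by rw [hM]; linarith
      have : LipschitzWith (Real.toNNReal M) F := by
        apply LipschitzWith.of_dist_le_mul
        intro y z
        rw [Real.dist_eq, Real.coe_toNNReal M hM0, dist_eq_norm]
        rcases abs_cases (F y - F z) with ⟨h13, _⟩ | ⟨h13, _⟩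
        · rw [h13]; linarith [hFlipb y z]
        · rw [h13]
          have := hFlipb z y
          rw [norm_sub_rev] at this
          linarith
      exact this.continuous
    -- integrability
    have intφX := integrable_comp μ hXm hXK hφc
    have intφY := integrable_comp μ hYm hYK hφc
    have intfX := integrable_comp μ hXm hXK hfc
    have intfY := integrable_comp μ hYm hYK hfc
    have intFX := integrable_comp μ hXm hXK hFcont
    have intFY := integrable_comp μ hYm hYK hFcont
    -- chain of inequalities
    have e1X : ∫ ω, (φ (X ω) + t * f (X ω)) ∂μ
        = ∫ ω, φ (X ω) ∂μ + ∫ ω, t * f (X ω) ∂μ := integral_add intφX (intfX.const_mul t)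
    have e1Y : ∫ ω, (φ (Y ω) + t * f (Y ω)) ∂μ
        = ∫ ω, φ (Y ω) ∂μ + ∫ ω, t * f (Y ω) ∂μ := integral_add intφY (intfY.const_mul t)
    have e2X : ∫ ω, t * f (X ω) ∂μ = t * ∫ ω, f (X ω) ∂μ := integral_const_mul t _
    have e2Y : ∫ ω, t * f (Y ω) ∂μ = t * ∫ ω, f (Y ω) ∂μ := integral_const_mul t _
    have e3 : ∫ ω, (φ (X ω) + t * f (X ω) - t * ε) ∂μ
        = ∫ ω, (φ (X ω) + t * f (X ω)) ∂μ - ∫ (_ : Ω), (t * ε) ∂μ :=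
      integral_sub (intφX.add (intfX.const_mul t)) (integrable_const _)
    have e4 : ∫ (_ : Ω), (t * ε) ∂μ = t * ε := by simp [measure_univ]
    have step1 : ∫ ω, φ (X ω) ∂μ + t * ∫ ω, f (X ω) ∂μ - t * ε ≤ ∫ ω, F (X ω) ∂μ := by
      have hptw : ∀ ω, φ (X ω) + t * f (X ω) - t * ε ≤ F (X ω) := fun ω =>
        hFge (X ω) (hXK ω)
      have hint : Integrable (fun ω => φ (X ω) + t * f (X ω) - t * ε) μ := by
        exact (intφX.add (intfX.const_mul t)).sub (integrable_const _)
      have hmono := integral_mono hint intFX hptw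
      rw [e3, e4, e1X, e2X] at hmono
      linarith
    have step2 : ∫ ω, F (X ω) ∂μ ≤ ∫ ω, F (Y ω) ∂μ := hdom F hFconv
    have step3 : ∫ ω, F (Y ω) ∂μ ≤ ∫ ω, φ (Y ω) ∂μ + t * ∫ ω, f (Y ω) ∂μ := by
      have hptw : ∀ ω, F (Y ω) ≤ φ (Y ω) + t * f (Y ω) := fun ω => hFle (Y ω)
      have hmono : ∫ ω, F (Y ω) ∂μ ≤ ∫ ω, (φ (Y ω) + t * f (Y ω)) ∂μ :=
        integral_mono intFY (by exact intφY.add (intfY.const_mul t)) hptw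
      rw [e1Y, e2Y] at hmono
      linarith
    have hfinal : t * ∫ ω, f (X ω) ∂μ ≤ t * (∫ ω, f (Y ω) ∂μ + ε) := by
      rw [mul_add]
      linarith [step1, step2, step3, heq]
    exact le_of_mul_le_mul_left hfinal ht
  exact le_of_forall_pos_le_add main
noncomputable def linU (u : Fin d → ℝ) : (Fin d → ℝ) →ₗ[ℝ] ℝ :=
  ∑ i : Fin d, u i • LinearMap.proj i

lemma linU_apply (u y : Fin d → ℝ) : linU u y = ∑ i, u i * y i := by
  simp [linU, LinearMap.sum_apply]

lemma convexOn_expU (u : Fin d → ℝ) :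
    ConvexOn ℝ Set.univ (fun y : Fin d → ℝ => Real.exp (linU u y)) := by
  have h := convexOn_exp.comp_affineMap (linU u).toAffineMap
  simp at h; exact h

lemma map_eq_of_convex_eq {Ω : Type*} [MeasurableSpace Ω] (μ : Measure Ω) [IsProbabilityMeasure μ]
    {X Y : Ω → (Fin d → ℝ)} (hXm : Measurable X) (hYm : Measurable Y)
    {R : ℝ} (hR0 : 0 ≤ R) (hXK : ∀ ω, ‖X ω‖ ≤ R) (hYK : ∀ ω, ‖Y ω‖ ≤ R)
    (h : ∀ g : (Fin d → ℝ) → ℝ, ConvexOn ℝ Set.univ g →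
      ∫ ω, g (X ω) ∂μ = ∫ ω, g (Y ω) ∂μ) :
    μ.map X = μ.map Y := by
  classical
  set K : Set (Fin d → ℝ) := closedBall 0 R with hK
  haveI : CompactSpace K := isCompact_iff_compactSpace.mp (isCompact_closedBall _ _)
  have hXmem : ∀ ω, X ω ∈ K := fun ω => by
    simpa [hK, mem_closedBall, dist_zero_right] using hXK ω
  have hYmem : ∀ ω, Y ω ∈ K := fun ω => by
    simpa [hK, mem_closedBall, dist_zero_right] using hYK ω
  set X' : Ω → K := fun ω => ⟨X ω, hXmem ω⟩ with hX'
  set Y' : Ω → K := fun ω => ⟨Y ω, hYmem ω⟩ with hY'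
  have hX'm : Measurable X' := hXm.subtype_mk
  have hY'm : Measurable Y' := hYm.subtype_mk
  have hint : ∀ (Z : Ω → K), Measurable Z → ∀ g : C(K, ℝ), Integrable (fun ω => g (Z ω)) μ := by
    intro Z hZ g
    refine (integrable_const ‖g‖).mono' (g.continuous.measurable.comp hZ).aestronglyMeasurable ?_
    exact Eventually.of_forall (fun ω => g.norm_coe_le_norm (Z ω))
  -- the linear functional
  set Λ : C(K, ℝ) →ₗ[ℝ] ℝ :=
    { toFun := fun g => ∫ ω, g (X' ω) ∂μ - ∫ ω, g (Y' ω) ∂μ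
      map_add' := by
        intro g1 g2
        simp only [ContinuousMap.add_apply]
        rw [integral_add (hint X' hX'm g1) (hint X' hX'm g2),
          integral_add (hint Y' hY'm g1) (hint Y' hY'm g2)]
        ring
      map_smul' := by
        intro c g
        simp only [ContinuousMap.smul_apply, smul_eq_mul, RingHom.id_apply]
        rw [integral_const_mul, integral_const_mul]
        ring } with hΛ
  have hΛbound : ∀ g : C(K, ℝ), |Λ g| ≤ 2 * ‖g‖ := by
    intro g
    have b1 : ∀ (Z : Ω → K), Measurable Z → |∫ ω, g (Z ω) ∂μ| ≤ ‖g‖ := by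
      intro Z hZ
      rw [← Real.norm_eq_abs]
      calc ‖∫ ω, g (Z ω) ∂μ‖ ≤ ‖g‖ * (μ Set.univ).toReal :=
        norm_integral_le_of_norm_le_const (Eventually.of_forall (fun ω => g.norm_coe_le_norm (Z ω)))
      _ = ‖g‖ := by simp [measure_univ]
    have h1 := b1 X' hX'm
    have h2 := b1 Y' hY'm
    simp only [hΛ, LinearMap.coe_mk, AddHom.coe_mk]
    calc |∫ ω, g (X' ω) ∂μ - ∫ ω, g (Y' ω) ∂μ| ≤ |∫ ω, g (X' ω) ∂μ| + |∫ ω, g (Y' ω) ∂μ| :=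
      abs_sub _ _
    _ ≤ 2 * ‖g‖ := by linarith
  -- exponential continuous maps on K
  set expCM : (Fin d → ℝ) → C(K, ℝ) := fun u =>
    ⟨fun y => Real.exp (linU u (y : Fin d → ℝ)),
      Real.continuous_exp.comp ((linU u).continuous_of_finiteDimensional.comp
        continuous_subtype_val)⟩ with hexpCM
  have hΛexp : ∀ u, Λ (expCM u) = 0 := by
    intro u
    have := h (fun y => Real.exp (linU u y)) (convexOn_expU u)
    simp only [hΛ, LinearMap.coe_mk, AddHom.coe_mk, hexpCM]
    simp only [ContinuousMap.coe_mk]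
    have hXeq : (fun ω => Real.exp (linU u (X' ω : Fin d → ℝ))) = fun ω => Real.exp (linU u (X ω)) := rfl
    rw [sub_eq_zero]
    exact this
  -- the submonoid of exponentials
  set T : Submonoid C(K, ℝ) :=
    { carrier := Set.range expCM
      one_mem' := ⟨0, by ext y; simp [hexpCM, linU_apply]⟩
      mul_mem' := by
        rintro a b ⟨u, rfl⟩ ⟨v, rfl⟩
        exact ⟨u + v, by ext y; simp [hexpCM, linU_apply, ← Real.exp_add, add_mul,
          Finset.sum_add_distrib]⟩ } with hT
  set A : Subalgebra ℝ C(K, ℝ) := Algebra.adjoin ℝ (Set.range expCM) with hA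
  have hAzero : ∀ g ∈ A, Λ g = 0 := by
    intro g hg
    have h1 : g ∈ Submodule.span ℝ (Submonoid.closure (Set.range expCM) : Set C(K, ℝ)) := by
      rw [← Algebra.adjoin_eq_span]
      exact hg
    have h2 : Submonoid.closure (Set.range expCM) = T := Submonoid.closure_eq T
    rw [h2] at h1
    have h3 : (T : Set C(K, ℝ)) ⊆ (LinearMap.ker Λ : Set C(K, ℝ)) := by
      rintro g' ⟨u, rfl⟩
      simp only [SetLike.mem_coe, LinearMap.mem_ker]
      exact hΛexp u
    have h4 := Submodule.span_le.mpr h3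
    exact LinearMap.mem_ker.mp (h4 h1)
  have hsep : A.SeparatesPoints := by
    intro x y hxy
    have hne : (x : Fin d → ℝ) ≠ (y : Fin d → ℝ) := fun hc => hxy (Subtype.ext hc)
    obtain ⟨i, hi⟩ := Function.ne_iff.mp hne
    refine ⟨expCM (Pi.single i 1), ⟨expCM (Pi.single i 1), Algebra.subset_adjoin ⟨_, rfl⟩, rfl⟩, ?_⟩
    simp only [hexpCM, ContinuousMap.coe_mk]
    have hval : ∀ z : K, Real.exp (linU (Pi.single i 1) (z : Fin d → ℝ))
        = Real.exp ((z : Fin d → ℝ) i) := by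
      intro z
      congr 1
      rw [linU_apply]
      simp [Pi.single_apply]
    rw [hval x, hval y]
    intro hc
    exact hi (Real.exp_injective hc)
  have htop : A.topologicalClosure = ⊤ :=
    ContinuousMap.subalgebra_topologicalClosure_eq_top_of_separatesPoints A hsep
  have hΛall : ∀ g : C(K, ℝ), Λ g = 0 := by
    intro g
    have hmem : g ∈ closure (A : Set C(K, ℝ)) := by
      have : g ∈ A.topologicalClosure := by rw [htop]; trivial
      exact this
    by_contra hne
    have hpos : 0 < |Λ g| := abs_pos.mpr hne
    obtain ⟨g', hg'A, hg'd⟩ := Metric.mem_closure_iff.mp hmem (|Λ g| / 4) (by linarith)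
    have hΛg' : Λ g' = 0 := hAzero g' hg'A
    have : Λ g - Λ g' = Λ (g - g') := (map_sub Λ g g').symm
    have hb := hΛbound (g - g')
    rw [← this, hΛg', sub_zero] at hb
    have hd : ‖g - g'‖ = dist g g' := (dist_eq_norm g g').symm
    rw [hd] at hb
    linarith
  -- conclude via Lipschitz test functions
  apply map_eq_of_lip μ hXm hYm
  intro f L hf hfb
  have hfc : Continuous f := hf.continuous
  set fK : C(K, ℝ) := ⟨fun y => f (y : Fin d → ℝ), hfc.comp continuous_subtype_val⟩ with hfK
  have := hΛall fK
  simp only [hΛ, LinearMap.coe_mk, AddHom.coe_mk] at this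
  have hXeq : (fun ω => fK (X' ω)) = fun ω => f (X ω) := rfl
  have hYeq : (fun ω => fK (Y' ω)) = fun ω => f (Y ω) := rfl
  rw [sub_eq_zero] at this
  exact this


lemma strictConvexOn_sumSq : StrictConvexOn ℝ Set.univ (fun y : Fin d → ℝ => ∑ i, (y i)^2) := by
  refine ⟨convex_univ, ?_⟩
  intro x _ y _ hxy a b ha hb hab
  obtain ⟨i₀, hi₀⟩ := Function.ne_iff.mp hxy
  have hterm : ∀ i ∈ Finset.univ, ((a • x + b • y) i)^2 ≤ a * (x i)^2 + b * (y i)^2 := by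
    intro i _
    simp only [Pi.add_apply, Pi.smul_apply, smul_eq_mul]
    nlinarith [sq_nonneg (x i - y i), mul_nonneg ha.le hb.le]
  have hstrict : ((a • x + b • y) i₀)^2 < a * (x i₀)^2 + b * (y i₀)^2 := by
    simp only [Pi.add_apply, Pi.smul_apply, smul_eq_mul]
    have h0 : x i₀ - y i₀ ≠ 0 := sub_ne_zero.mpr hi₀
    have h1 : 0 < (x i₀ - y i₀)^2 := lt_of_le_of_ne (sq_nonneg _) (Ne.symm (pow_ne_zero 2 h0))
    nlinarith [mul_pos ha hb]
  calc (fun y : Fin d → ℝ => ∑ i, (y i)^2) (a • x + b • y) = ∑ i, ((a • x + b • y) i)^2 := rfl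
  _ < ∑ i, (a * (x i)^2 + b * (y i)^2) :=
    Finset.sum_lt_sum hterm ⟨i₀, Finset.mem_univ _, hstrict⟩
  _ = a • ∑ i, (x i)^2 + b • ∑ i, (y i)^2 := by
    rw [Finset.sum_add_distrib, ← Finset.mul_sum, ← Finset.mul_sum]
    simp [smul_eq_mul]

lemma continuous_sumSq : Continuous (fun y : Fin d → ℝ => ∑ i, (y i)^2) := by
  exact continuous_finset_sum _ (fun i _ => (continuous_apply i).pow 2)

lemma integral_eq_of_map_eq {Ω : Type*} [MeasurableSpace Ω] (μ : Measure Ω)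
    {X Y : Ω → (Fin d → ℝ)} (hXm : Measurable X) (hYm : Measurable Y)
    (hmap : μ.map X = μ.map Y) {g : (Fin d → ℝ) → ℝ} (hg : Continuous g) :
    ∫ ω, g (X ω) ∂μ = ∫ ω, g (Y ω) ∂μ := by
  rw [← integral_map hXm.aemeasurable hg.aestronglyMeasurable,
    ← integral_map hYm.aemeasurable hg.aestronglyMeasurable, hmap]

end StrictDomAux

open StrictDomAux in
/-- equivalence of the three characterizations of strict dominance. -/
theorem stmt3 {Ω : Type*} [MeasurableSpace Ω] (μ : Measure Ω) [IsProbabilityMeasure μ]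
    {d : ℕ} (X Y : Ω → (Fin d → ℝ))
    (hXm : Measurable X) (hYm : Measurable Y)
    (hXb : ∃ C, ∀ ω, ‖X ω‖ ≤ C) (hYb : ∃ C, ∀ ω, ‖Y ω‖ ≤ C) :
    ((ConcaveDom μ X Y ∧ ∃ φ : (Fin d → ℝ) → ℝ, ConvexOn ℝ Set.univ φ ∧
        ∫ ω, φ (X ω) ∂μ < ∫ ω, φ (Y ω) ∂μ) ↔
      (ConcaveDom μ X Y ∧ μ.map X ≠ μ.map Y)) ∧
    ((ConcaveDom μ X Y ∧ μ.map X ≠ μ.map Y) ↔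
      (ConcaveDom μ X Y ∧ ∀ φ : (Fin d → ℝ) → ℝ,
        StrictConvexOn ℝ Set.univ φ → Continuous φ →
          ∫ ω, φ (X ω) ∂μ < ∫ ω, φ (Y ω) ∂μ)) := by
  obtain ⟨CX, hXb⟩ := hXb
  obtain ⟨CY, hYb⟩ := hYb
  set R : ℝ := max (max CX CY) 0 with hR
  have hR0 : (0:ℝ) ≤ R := le_max_right _ _
  have hXK : ∀ ω, ‖X ω‖ ≤ R := fun ω =>
    le_trans (hXb ω) (le_max_of_le_left (le_max_left _ _))
  have hYK : ∀ ω, ‖Y ω‖ ≤ R := fun ω =>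
    le_trans (hYb ω) (le_max_of_le_left (le_max_right _ _))
  constructor
  · constructor
    · rintro ⟨hdom, φ, hφ, hlt⟩
      refine ⟨hdom, fun hmap => ?_⟩
      have hc : Continuous φ := hφ.locallyLipschitz.continuous
      have := integral_eq_of_map_eq μ hXm hYm hmap hc
      linarith
    · rintro ⟨hdom, hne⟩
      refine ⟨hdom, ?_⟩
      by_contra hno
      push_neg at hno
      have hall : ∀ g : (Fin d → ℝ) → ℝ, ConvexOn ℝ Set.univ g →
          ∫ ω, g (X ω) ∂μ = ∫ ω, g (Y ω) ∂μ :=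
        fun g hg => le_antisymm (hdom g hg) (hno g hg)
      exact hne (map_eq_of_convex_eq μ hXm hYm hR0 hXK hYK hall)
  · constructor
    · rintro ⟨hdom, hne⟩
      refine ⟨hdom, fun φ hφs hφc => ?_⟩
      rcases lt_or_eq_of_le (hdom φ hφs.convexOn) with hlt | heq
      · exact hlt
      · exfalso
        apply hne
        apply map_eq_of_lip μ hXm hYm
        intro f L hf hfb
        have h1 := L5core μ hXm hYm hR0 hXK hYK hdom hφs hφc heq hf hfb
        have h2 := L5core μ hXm hYm hR0 hXK hYK hdom hφs hφc heq hf.neg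
          (fun y => by rw [Pi.neg_apply, abs_neg]; exact hfb y)
        have h2' : ∫ ω, f (Y ω) ∂μ ≤ ∫ ω, f (X ω) ∂μ := by
          have e1 : ∫ ω, (-f) (X ω) ∂μ = - ∫ ω, f (X ω) ∂μ := by
            simp only [Pi.neg_apply]
            exact integral_neg _
          have e2 : ∫ ω, (-f) (Y ω) ∂μ = - ∫ ω, f (Y ω) ∂μ := by
            simp only [Pi.neg_apply]
            exact integral_neg _
          rw [e1, e2] at h2
          linarith
        exact le_antisymm h1 h2'
    · rintro ⟨hdom, hstrict⟩
      refine ⟨hdom, fun hmap => ?_⟩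
      have hlt := hstrict _ strictConvexOn_sumSq continuous_sumSq
      have := integral_eq_of_map_eq μ hXm hYm hmap continuous_sumSq
      linarith
end

section
/- If X₁ and X₂ are bounded real random variables that are comonotone, then the quantile function of X₁ + X₂ equals the sum of the quantile functions: F_{X₁+X₂}^{-1} = F_{X₁}^{-1} + F_{X₂}^{-1} almost everywhere on (0,1). -/
open MeasureTheory

/-- Comonotonicity of a pair of real random variables. -/
def Comonotone {Ω : Type*} [MeasurableSpace Ω] (μ : Measure Ω) (X Y : Ω → ℝ) : Prop :=
  ∀ᵐ q ∂(μ.prod μ), 0 ≤ (X q.1 - X q.2) * (Y q.1 - Y q.2)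

/-- Quantile function (generalized inverse of the cdf) of a law on ℝ. -/
noncomputable def quantileFn (ν : Measure ℝ) (t : ℝ) : ℝ :=
  sInf {x | t ≤ ProbabilityTheory.cdf ν x}

open Set Filter ProbabilityTheory
open scoped Topology

set_option linter.unusedSectionVars false

section Galois
variable {ν : Measure ℝ} [IsProbabilityMeasure ν]

lemma quantile_set_nonempty {t : ℝ} (ht1 : t < 1) : {x | t ≤ cdf ν x}.Nonempty := by
  obtain ⟨x, hx⟩ := ((tendsto_cdf_atTop ν).eventually (eventually_gt_nhds ht1)).exists
  exact ⟨x, hx.le⟩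

lemma quantile_set_bddBelow {t : ℝ} (ht0 : 0 < t) : BddBelow {x | t ≤ cdf ν x} := by
  obtain ⟨y, hy⟩ := ((tendsto_cdf_atBot ν).eventually (eventually_lt_nhds ht0)).exists
  refine ⟨y, fun z hz => ?_⟩
  by_contra h
  exact absurd (hz.trans (monotone_cdf ν (le_of_lt (not_le.mp h)))) (not_le.mpr hy)

lemma le_cdf_quantile {t : ℝ} (ht0 : 0 < t) (ht1 : t < 1) :
    t ≤ cdf ν (quantileFn ν t) := by
  set S := {x | t ≤ cdf ν x} with hS
  have hne := quantile_set_nonempty (ν := ν) ht1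
  have hbdd := quantile_set_bddBelow (ν := ν) ht0
  set a := sInf S with ha
  have hrc : ContinuousWithinAt (cdf ν) (Ici a) a := (cdf ν).right_continuous a
  rw [Metric.continuousWithinAt_iff] at hrc
  refine le_of_forall_pos_le_add (fun ε hε => ?_)
  obtain ⟨δ, hδ, hδ'⟩ := hrc ε hε
  obtain ⟨x, hxS, hxδ⟩ := (csInf_lt_iff hbdd hne).mp (by linarith : sInf S < a + δ)
  have hax : a ≤ x := csInf_le hbdd hxS
  have hdist : dist x a < δ := by
    rw [Real.dist_eq, abs_of_nonneg (by linarith)]; linarith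
  have := hδ' hax hdist
  rw [Real.dist_eq] at this
  have := abs_lt.mp this
  calc t ≤ cdf ν x := hxS
    _ ≤ cdf ν a + ε := by linarith [this.2]

lemma quantile_le_iff {t x : ℝ} (ht0 : 0 < t) (ht1 : t < 1) :
    quantileFn ν t ≤ x ↔ t ≤ cdf ν x := by
  constructor
  · intro h
    exact (le_cdf_quantile ht0 ht1).trans (monotone_cdf ν h)
  · intro h
    exact csInf_le (quantile_set_bddBelow ht0) h

lemma quantile_monotoneOn : MonotoneOn (quantileFn ν) (Ioo 0 1) := by
  intro s hs t ht hst
  exact (quantile_le_iff hs.1 hs.2).mpr (hst.trans (le_cdf_quantile ht.1 ht.2))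

end Galois

section Bounded
variable {Ω : Type*} [MeasurableSpace Ω] {μ : Measure Ω} [IsProbabilityMeasure μ]
  {X : Ω → ℝ} (hm : Measurable X) {C : ℝ} (hb : ∀ ω, |X ω| ≤ C)

include hm in
lemma cdf_map_eq (x : ℝ) : cdf (μ.map X) x = (μ (X ⁻¹' Iic x)).toReal := by
  have : IsProbabilityMeasure (μ.map X) := Measure.isProbabilityMeasure_map hm.aemeasurable
  rw [cdf_eq_real, measureReal_def, Measure.map_apply hm measurableSet_Iic]

include hm hb in
lemma cdf_map_top : cdf (μ.map X) C = 1 := by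
  rw [cdf_map_eq hm]
  have : X ⁻¹' Iic C = univ := eq_univ_of_forall (fun ω => (abs_le.mp (hb ω)).2)
  rw [this, measure_univ, ENNReal.toReal_one]

include hm hb in
lemma cdf_map_bot {x : ℝ} (hx : x < -C) : cdf (μ.map X) x = 0 := by
  rw [cdf_map_eq hm]
  have : X ⁻¹' Iic x = ∅ := by
    ext ω; simp only [mem_preimage, mem_Iic, mem_empty_iff_false, iff_false, not_le]
    exact hx.trans_le (neg_le_of_abs_le (hb ω))
  rw [this, measure_empty, ENNReal.toReal_zero]

include hm hb in
lemma quantile_mem_Icc {t : ℝ} (ht0 : 0 < t) (ht1 : t < 1) :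
    quantileFn (μ.map X) t ∈ Icc (-C) C := by
  have : IsProbabilityMeasure (μ.map X) := Measure.isProbabilityMeasure_map hm.aemeasurable
  constructor
  · by_contra h
    push_neg at h
    have h1 := le_cdf_quantile (ν := μ.map X) ht0 ht1
    rw [cdf_map_bot hm hb h] at h1
    linarith
  · exact (quantile_le_iff ht0 ht1).mpr (by rw [cdf_map_top hm hb]; exact ht1.le)

end Bounded

section Ext
variable {ν : Measure ℝ} [IsProbabilityMeasure ν] {C : ℝ}

/-- Monotone extension of the quantile function to all of ℝ. -/
noncomputable def qExt (ν : Measure ℝ) (C : ℝ) : ℝ → ℝ :=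
  fun t => if t ≤ 0 then -C else if t < 1 then quantileFn ν t else C

lemma qExt_eq_quantile {t : ℝ} (ht : t ∈ Ioo (0:ℝ) 1) : qExt ν C t = quantileFn ν t := by
  rw [qExt, if_neg (not_le.mpr ht.1), if_pos ht.2]

variable (hbound : ∀ t ∈ Ioo (0:ℝ) 1, quantileFn ν t ∈ Icc (-C) C)

include hbound in
lemma qExt_mono : Monotone (qExt ν C) := by
  have hCC : -C ≤ C := (hbound (1/2) (by norm_num)).1.trans (hbound (1/2) (by norm_num)).2
  intro s t hst
  unfold qExt
  by_cases hs0 : s ≤ 0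
  · rw [if_pos hs0]
    by_cases ht0 : t ≤ 0
    · rw [if_pos ht0]
    · rw [if_neg ht0]
      by_cases ht1 : t < 1
      · rw [if_pos ht1]; exact (hbound t ⟨not_le.mp ht0, ht1⟩).1
      · rw [if_neg ht1]; exact hCC
  · rw [if_neg hs0]
    have ht0 : ¬ t ≤ 0 := fun h => hs0 (hst.trans h)
    rw [if_neg ht0]
    by_cases hs1 : s < 1
    · rw [if_pos hs1]
      by_cases ht1 : t < 1
      · rw [if_pos ht1]
        exact quantile_monotoneOn ⟨not_le.mp hs0, hs1⟩ ⟨not_le.mp ht0, ht1⟩ hst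
      · rw [if_neg ht1]; exact (hbound s ⟨not_le.mp hs0, hs1⟩).2
    · rw [if_neg hs1, if_neg (by linarith [not_lt.mp hs1] : ¬ t < 1)]

include hbound in
lemma qExt_abs_le (t : ℝ) : |qExt ν C t| ≤ C := by
  have hCC : -C ≤ C := (hbound (1/2) (by norm_num)).1.trans (hbound (1/2) (by norm_num)).2
  have hC0 : 0 ≤ C := by linarith
  unfold qExt
  by_cases hs0 : t ≤ 0
  · rw [if_pos hs0, abs_neg, abs_of_nonneg hC0]
  · rw [if_neg hs0]
    by_cases ht1 : t < 1
    · rw [if_pos ht1]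
      have := hbound t ⟨not_le.mp hs0, ht1⟩
      exact abs_le.mpr ⟨this.1, this.2⟩
    · rw [if_neg ht1, abs_of_nonneg hC0]

instance : IsProbabilityMeasure (volume.restrict (Ioo (0:ℝ) 1)) := by
  constructor
  rw [Measure.restrict_apply_univ]
  simp [Real.volume_Ioo]

include hbound in
lemma qExt_map : (volume.restrict (Ioo (0:ℝ) 1)).map (qExt ν C) = ν := by
  have hmeas : Measurable (qExt ν C) := (qExt_mono hbound).measurable
  haveI : IsProbabilityMeasure ((volume.restrict (Ioo (0:ℝ) 1)).map (qExt ν C)) :=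
    Measure.isProbabilityMeasure_map hmeas.aemeasurable
  refine Measure.ext_of_Iic _ _ (fun x => ?_)
  rw [Measure.map_apply hmeas measurableSet_Iic,
    Measure.restrict_apply (hmeas measurableSet_Iic)]
  have hset : qExt ν C ⁻¹' Iic x ∩ Ioo 0 1 = Iic (cdf ν x) ∩ Ioo 0 1 := by
    ext t
    simp only [mem_inter_iff, mem_preimage, mem_Iic, and_congr_left_iff]
    intro ht
    rw [qExt_eq_quantile ht]
    exact quantile_le_iff ht.1 ht.2
  rw [hset, ← ofReal_cdf ν x]
  have hc0 : 0 ≤ cdf ν x := cdf_nonneg ν x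
  have hc1 : cdf ν x ≤ 1 := cdf_le_one ν x
  by_cases h : cdf ν x < 1
  · have : Iic (cdf ν x) ∩ Ioo 0 1 = Ioc 0 (cdf ν x) := by
      ext t
      simp only [mem_inter_iff, mem_Iic, mem_Ioo, mem_Ioc]
      constructor
      · rintro ⟨h1, h2, h3⟩; exact ⟨h2, h1⟩
      · rintro ⟨h1, h2⟩; exact ⟨h2, h1, h2.trans_lt h⟩
    rw [this, Real.volume_Ioc, sub_zero]
  · have hc : cdf ν x = 1 := le_antisymm hc1 (not_lt.mp h)
    have : Iic (cdf ν x) ∩ Ioo 0 1 = Ioo 0 1 := by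
      rw [inter_eq_right]
      intro t ht
      rw [hc]; exact ht.2.le
    rw [this, Real.volume_Ioo, hc]; norm_num

include hbound in
lemma integral_qExt : ∫ t in Ioo (0:ℝ) 1, qExt ν C t = ∫ x, x ∂ν := by
  conv_rhs => rw [← qExt_map hbound]
  exact (integral_map (qExt_mono hbound).measurable.aemeasurable
    measurable_id.aestronglyMeasurable).symm

include hbound in
lemma integrable_qExt : Integrable (qExt ν C) (volume.restrict (Ioo (0:ℝ) 1)) :=
  ⟨(qExt_mono hbound).measurable.aestronglyMeasurable,
    HasFiniteIntegral.of_bounded (C := C) (ae_of_all _ (fun t => by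
      rw [Real.norm_eq_abs]; exact qExt_abs_le hbound t))⟩

end Ext

lemma comonotone_min {Ω : Type*} [MeasurableSpace Ω] {μ : Measure Ω} [IsProbabilityMeasure μ]
    {X Y : Ω → ℝ} (hXm : Measurable X) (hYm : Measurable Y)
    (hcom : Comonotone μ X Y) (a b : ℝ) :
    min (μ (X ⁻¹' Iic a)) (μ (Y ⁻¹' Iic b)) ≤ μ (X ⁻¹' Iic a ∩ Y ⁻¹' Iic b) := by
  set A := X ⁻¹' Iic a with hA
  set B := Y ⁻¹' Iic b with hB
  have hAm : MeasurableSet A := hXm measurableSet_Iic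
  have hBm : MeasurableSet B := hYm measurableSet_Iic
  have hD : μ.prod μ {p : Ω × Ω | (X p.1 - X p.2) * (Y p.1 - Y p.2) < 0} = 0 := by
    have h : (μ.prod μ) {p : Ω × Ω | ¬ 0 ≤ (X p.1 - X p.2) * (Y p.1 - Y p.2)} = 0 :=
      ae_iff.mp hcom
    convert h using 2
    ext p
    simp [not_le]
  have hsub : (A \ B) ×ˢ (B \ A) ⊆ {p : Ω × Ω | (X p.1 - X p.2) * (Y p.1 - Y p.2) < 0} := by
    rintro ⟨p, q⟩ ⟨⟨hpA, hpB⟩, hqB, hqA⟩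
    have h1 : X p ≤ a := hpA
    have h2 : ¬ Y p ≤ b := hpB
    have h3 : Y q ≤ b := hqB
    have h4 : ¬ X q ≤ a := hqA
    push_neg at h2 h4
    show (X (p, q).1 - X (p, q).2) * (Y (p, q).1 - Y (p, q).2) < 0
    exact mul_neg_of_neg_of_pos (by dsimp only; linarith) (by dsimp only; linarith)
  have h0 : μ (A \ B) * μ (B \ A) = 0 := by
    rw [← Measure.prod_prod]
    exact measure_mono_null hsub hD
  rcases mul_eq_zero.mp h0 with h | h
  · calc min (μ A) (μ B) ≤ μ A := min_le_left _ _
      _ = μ (A ∩ B) + μ (A \ B) := (measure_inter_add_diff A hBm).symm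
      _ = μ (A ∩ B) := by rw [h, add_zero]
  · calc min (μ A) (μ B) ≤ μ B := min_le_right _ _
      _ = μ (B ∩ A) + μ (B \ A) := (measure_inter_add_diff B hAm).symm
      _ = μ (A ∩ B) := by rw [h, add_zero, inter_comm]

lemma quantile_sum_le {Ω : Type*} [MeasurableSpace Ω] {μ : Measure Ω} [IsProbabilityMeasure μ]
    {X Y : Ω → ℝ} (hXm : Measurable X) (hYm : Measurable Y) (hcom : Comonotone μ X Y)
    {t : ℝ} (ht0 : 0 < t) (ht1 : t < 1) :
    quantileFn (μ.map (fun ω => X ω + Y ω)) t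
      ≤ quantileFn (μ.map X) t + quantileFn (μ.map Y) t := by
  haveI : IsProbabilityMeasure (μ.map X) := Measure.isProbabilityMeasure_map hXm.aemeasurable
  haveI : IsProbabilityMeasure (μ.map Y) := Measure.isProbabilityMeasure_map hYm.aemeasurable
  haveI : IsProbabilityMeasure (μ.map (fun ω => X ω + Y ω)) :=
    Measure.isProbabilityMeasure_map (hXm.add hYm).aemeasurable
  set a := quantileFn (μ.map X) t with ha
  set b := quantileFn (μ.map Y) t with hb
  rw [quantile_le_iff ht0 ht1]
  have hA : ENNReal.ofReal t ≤ μ (X ⁻¹' Iic a) := by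
    rw [← Measure.map_apply hXm measurableSet_Iic, ← ofReal_cdf (μ.map X) a]
    exact ENNReal.ofReal_le_ofReal (le_cdf_quantile ht0 ht1)
  have hB : ENNReal.ofReal t ≤ μ (Y ⁻¹' Iic b) := by
    rw [← Measure.map_apply hYm measurableSet_Iic, ← ofReal_cdf (μ.map Y) b]
    exact ENNReal.ofReal_le_ofReal (le_cdf_quantile ht0 ht1)
  have hmin : ENNReal.ofReal t ≤ μ (X ⁻¹' Iic a ∩ Y ⁻¹' Iic b) :=
    le_trans (le_min hA hB) (comonotone_min hXm hYm hcom a b)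
  have hsubset : X ⁻¹' Iic a ∩ Y ⁻¹' Iic b ⊆ (fun ω => X ω + Y ω) ⁻¹' Iic (a + b) := by
    rintro ω ⟨h1, h2⟩
    simp only [mem_preimage, mem_Iic] at h1 h2 ⊢
    exact add_le_add h1 h2
  rw [cdf_eq_real, measureReal_def, Measure.map_apply (f := fun ω => X ω + Y ω) (hXm.add hYm) measurableSet_Iic,
    ← ENNReal.ofReal_le_iff_le_toReal (measure_ne_top _ _)]
  exact hmin.trans (measure_mono hsubset)

/-- for comonotone random variables the quantile function of the sum
is the sum of the quantile functions, a.e. on (0,1). -/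
theorem stmt6 {Ω : Type*} [MeasurableSpace Ω] (μ : Measure Ω) [IsProbabilityMeasure μ]
    (X₁ X₂ : Ω → ℝ) (h₁m : Measurable X₁) (h₂m : Measurable X₂)
    (h₁b : ∃ C, ∀ ω, |X₁ ω| ≤ C) (h₂b : ∃ C, ∀ ω, |X₂ ω| ≤ C)
    (hcom : Comonotone μ X₁ X₂) :
    ∀ᵐ t ∂(volume.restrict (Set.Ioo (0:ℝ) 1)),
      quantileFn (μ.map (fun ω => X₁ ω + X₂ ω)) t
        = quantileFn (μ.map X₁) t + quantileFn (μ.map X₂) t := by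
  obtain ⟨C₁', hC₁'⟩ := h₁b
  obtain ⟨C₂', hC₂'⟩ := h₂b
  set C₁ := max C₁' 0 with hC₁def
  set C₂ := max C₂' 0 with hC₂def
  have hC₁ : ∀ ω, |X₁ ω| ≤ C₁ := fun ω => (hC₁' ω).trans (le_max_left _ _)
  have hC₂ : ∀ ω, |X₂ ω| ≤ C₂ := fun ω => (hC₂' ω).trans (le_max_left _ _)
  set C := C₁ + C₂ with hCdef
  have hSm : Measurable (fun ω => X₁ ω + X₂ ω) := h₁m.add h₂m
  have hCS : ∀ ω, |X₁ ω + X₂ ω| ≤ C :=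
    fun ω => (abs_add_le _ _).trans (add_le_add (hC₁ ω) (hC₂ ω))
  set ν₁ := μ.map X₁ with hν₁
  set ν₂ := μ.map X₂ with hν₂
  set νS := μ.map (fun ω => X₁ ω + X₂ ω) with hνS
  haveI : IsProbabilityMeasure ν₁ := Measure.isProbabilityMeasure_map h₁m.aemeasurable
  haveI : IsProbabilityMeasure ν₂ := Measure.isProbabilityMeasure_map h₂m.aemeasurable
  haveI : IsProbabilityMeasure νS := Measure.isProbabilityMeasure_map hSm.aemeasurable
  have hb1 : ∀ t ∈ Ioo (0:ℝ) 1, quantileFn ν₁ t ∈ Icc (-C₁) C₁ :=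
    fun t ht => quantile_mem_Icc h₁m hC₁ ht.1 ht.2
  have hb2 : ∀ t ∈ Ioo (0:ℝ) 1, quantileFn ν₂ t ∈ Icc (-C₂) C₂ :=
    fun t ht => quantile_mem_Icc h₂m hC₂ ht.1 ht.2
  have hbS : ∀ t ∈ Ioo (0:ℝ) 1, quantileFn νS t ∈ Icc (-C) C :=
    fun t ht => quantile_mem_Icc hSm hCS ht.1 ht.2
  -- integrability of the random variables
  have hint1 : Integrable X₁ μ :=
    ⟨h₁m.aestronglyMeasurable, HasFiniteIntegral.of_bounded (C := C₁)
      (ae_of_all μ (fun ω => by rw [Real.norm_eq_abs]; exact hC₁ ω))⟩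
  have hint2 : Integrable X₂ μ :=
    ⟨h₂m.aestronglyMeasurable, HasFiniteIntegral.of_bounded (C := C₂)
      (ae_of_all μ (fun ω => by rw [Real.norm_eq_abs]; exact hC₂ ω))⟩
  -- integrals of the extended quantile functions
  have hI1 : ∫ t in Ioo (0:ℝ) 1, qExt ν₁ C₁ t = ∫ ω, X₁ ω ∂μ := by
    rw [integral_qExt hb1, hν₁]
    exact integral_map h₁m.aemeasurable measurable_id.aestronglyMeasurable
  have hI2 : ∫ t in Ioo (0:ℝ) 1, qExt ν₂ C₂ t = ∫ ω, X₂ ω ∂μ := by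
    rw [integral_qExt hb2, hν₂]
    exact integral_map h₂m.aemeasurable measurable_id.aestronglyMeasurable
  have hIS : ∫ t in Ioo (0:ℝ) 1, qExt νS C t = ∫ ω, X₁ ω + X₂ ω ∂μ := by
    rw [integral_qExt hbS, hνS]
    exact integral_map hSm.aemeasurable measurable_id.aestronglyMeasurable
  have hES : ∫ ω, X₁ ω + X₂ ω ∂μ = (∫ ω, X₁ ω ∂μ) + ∫ ω, X₂ ω ∂μ :=
    integral_add hint1 hint2
  -- the nonnegative difference
  set f : ℝ → ℝ := fun t => qExt ν₁ C₁ t + qExt ν₂ C₂ t - qExt νS C t with hf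
  have hf_int : Integrable f (volume.restrict (Ioo (0:ℝ) 1)) :=
    ((integrable_qExt hb1).add (integrable_qExt hb2)).sub (integrable_qExt hbS)
  have hf_nonneg : 0 ≤ᵐ[volume.restrict (Ioo (0:ℝ) 1)] f := by
    filter_upwards [ae_restrict_mem measurableSet_Ioo] with t ht
    have hle : quantileFn νS t ≤ quantileFn ν₁ t + quantileFn ν₂ t :=
      quantile_sum_le h₁m h₂m hcom ht.1 ht.2
    simp only [hf, Pi.zero_apply, qExt_eq_quantile ht]
    linarith
  have hf_zero : ∫ t in Ioo (0:ℝ) 1, f t = 0 := by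
    have h1 : ∫ t in Ioo (0:ℝ) 1, f t
        = (∫ t in Ioo (0:ℝ) 1, (qExt ν₁ C₁ t + qExt ν₂ C₂ t))
          - ∫ t in Ioo (0:ℝ) 1, qExt νS C t := by
      simpa using
        integral_sub ((integrable_qExt hb1).add (integrable_qExt hb2)) (integrable_qExt hbS)
    have h2 : ∫ t in Ioo (0:ℝ) 1, (qExt ν₁ C₁ t + qExt ν₂ C₂ t)
        = (∫ t in Ioo (0:ℝ) 1, qExt ν₁ C₁ t) + ∫ t in Ioo (0:ℝ) 1, qExt ν₂ C₂ t :=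
      integral_add (integrable_qExt hb1) (integrable_qExt hb2)
    rw [h1, h2, hI1, hI2, hIS, hES]
    ring
  have hae := (integral_eq_zero_iff_of_nonneg_ae hf_nonneg hf_int).mp hf_zero
  filter_upwards [hae, ae_restrict_mem measurableSet_Ioo] with t h0 ht
  simp only [hf, Pi.zero_apply, qExt_eq_quantile ht] at h0
  show quantileFn νS t = quantileFn ν₁ t + quantileFn ν₂ t
  linarith
end

section
/- A family (X₁,...,X_p) of real random variables is comonotone if and only if there exist nondecreasing 1-Lipschitz functions f₁,...,f_p : R → R with Σᵢ fᵢ(x) = x for all x, such that Xᵢ = fᵢ(X) a.s. for all i, where X = Σᵢ Xᵢ. -/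
namespace Stmt8Aux
variable {p : ℕ}
noncomputable def Ssum (v : Fin p → ℝ) : ℝ := ∑ i, v i

variable (T : Set (Fin p → ℝ))

def Ex (x : ℝ) : Set (Fin p → ℝ) := {v ∈ T | Ssum v ≤ x}
def Fx (x : ℝ) : Set (Fin p → ℝ) := {v ∈ T | x ≤ Ssum v}

noncomputable def Gm (i : Fin p) (x : ℝ) : ℝ := sSup ((fun v => v i) '' Ex T x)
noncomputable def Gp (i : Fin p) (x : ℝ) : ℝ := sInf ((fun v => v i) '' Fx T x)
noncomputable def aa (x : ℝ) : ℝ := sSup (Ssum '' Ex T x)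
noncomputable def bb (x : ℝ) : ℝ := sInf (Ssum '' Fx T x)

open Classical in
noncomputable def ff (i : Fin p) (x : ℝ) : ℝ :=
  if (Ex T x).Nonempty then
    (if (Fx T x).Nonempty then
      (if aa T x = bb T x then Gm T i x
       else Gm T i x + (x - aa T x) * (Gp T i x - Gm T i x) / (bb T x - aa T x))
     else Gm T i x + (x - aa T x) / p)
  else Gp T i x + (x - bb T x) / p

def Star (T : Set (Fin p → ℝ)) : Prop :=
  ∀ v ∈ T, ∀ w ∈ T, Ssum v ≤ Ssum w → ∀ i, v i ≤ w i ∧ w i - v i ≤ Ssum w - Ssum v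

variable {T}

section Bounds
variable (hT : Star T) (hne : T.Nonempty)
include hT hne

lemma bddAbove_proj_Ex (i : Fin p) (x : ℝ) :
    BddAbove ((fun v => v i) '' Ex T x) := by
  obtain ⟨w, hw⟩ := hne
  refine ⟨max (w i) (w i + (x - Ssum w)), ?_⟩
  rintro t ⟨v, ⟨hv, hvx⟩, rfl⟩
  rcases le_total (Ssum v) (Ssum w) with h | h
  · exact le_max_of_le_left (hT v hv w hw h i).1
  · have := (hT w hw v hv h i).2
    refine le_max_of_le_right ?_
    linarith

lemma bddBelow_proj_Fx (i : Fin p) (x : ℝ) :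
    BddBelow ((fun v => v i) '' Fx T x) := by
  obtain ⟨w, hw⟩ := hne
  refine ⟨min (w i) (w i - (Ssum w - x)), ?_⟩
  rintro t ⟨v, ⟨hv, hvx⟩, rfl⟩
  rcases le_total (Ssum w) (Ssum v) with h | h
  · exact min_le_of_left_le (hT w hw v hv h i).1
  · have := (hT v hv w hw h i).2
    refine min_le_of_right_le ?_
    linarith

end Bounds

lemma bddAbove_ssum_Ex (x : ℝ) : BddAbove (Ssum '' Ex T x) :=
  ⟨x, by rintro t ⟨v, ⟨hv, hvx⟩, rfl⟩; exact hvx⟩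

lemma bddBelow_ssum_Fx (x : ℝ) : BddBelow (Ssum '' Fx T x) :=
  ⟨x, by rintro t ⟨v, ⟨hv, hvx⟩, rfl⟩; exact hvx⟩

lemma aa_le {x : ℝ} (h : (Ex T x).Nonempty) : aa T x ≤ x :=
  csSup_le (h.image _) (by rintro t ⟨v, ⟨hv, hvx⟩, rfl⟩; exact hvx)

lemma le_bb {x : ℝ} (h : (Fx T x).Nonempty) : x ≤ bb T x :=
  le_csInf (h.image _) (by rintro t ⟨v, ⟨hv, hvx⟩, rfl⟩; exact hvx)

lemma ssum_le_aa {x : ℝ} {v : Fin p → ℝ} (hv : v ∈ Ex T x) : Ssum v ≤ aa T x :=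
  le_csSup (bddAbove_ssum_Ex x) ⟨v, hv, rfl⟩

lemma bb_le_ssum {x : ℝ} {v : Fin p → ℝ} (hv : v ∈ Fx T x) : bb T x ≤ Ssum v :=
  csInf_le (bddBelow_ssum_Fx x) ⟨v, hv, rfl⟩

section WithStar
variable (hT : Star T) (hne : T.Nonempty)
include hT hne

lemma le_Gm {x : ℝ} {v : Fin p → ℝ} (hv : v ∈ Ex T x) (i : Fin p) : v i ≤ Gm T i x :=
  le_csSup (bddAbove_proj_Ex hT hne i x) ⟨v, hv, rfl⟩

lemma Gp_le {x : ℝ} {v : Fin p → ℝ} (hv : v ∈ Fx T x) (i : Fin p) : Gp T i x ≤ v i :=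
  csInf_le (bddBelow_proj_Fx hT hne i x) ⟨v, hv, rfl⟩

lemma Gm_le_Gp {x : ℝ} (hE : (Ex T x).Nonempty) (hF : (Fx T x).Nonempty) (i : Fin p) :
    Gm T i x ≤ Gp T i x := by
  apply csSup_le (hE.image _)
  rintro t ⟨v, ⟨hv, hvx⟩, rfl⟩
  apply le_csInf (hF.image _)
  rintro t ⟨w, ⟨hw, hwx⟩, rfl⟩
  exact (hT v hv w hw (le_trans hvx hwx) i).1

lemma sum_Gm {x : ℝ} (hE : (Ex T x).Nonempty) : ∑ i, Gm T i x = aa T x := by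
  apply le_antisymm
  · apply le_of_forall_pos_le_add
    intro ε hε
    have hεp : 0 < ε / (p + 1) := by positivity
    obtain ⟨s, ⟨v, hv, rfl⟩, hs⟩ :=
      exists_lt_of_lt_csSup (hE.image Ssum) (show aa T x - ε / (p+1) < aa T x by linarith)
    have hGle : ∀ i, Gm T i x ≤ v i + ε / (p+1) := by
      intro i
      apply csSup_le (hE.image _)
      rintro t ⟨w, hw, rfl⟩
      rcases le_total (Ssum w) (Ssum v) with h | h
      · have := (hT w hw.1 v hv.1 h i).1; linarith
      · have := (hT v hv.1 w hw.1 h i).2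
        have h2 : Ssum w ≤ aa T x := ssum_le_aa hw
        linarith
    calc ∑ i, Gm T i x ≤ ∑ i : Fin p, (v i + ε / (p+1)) := Finset.sum_le_sum fun i _ => hGle i
      _ = Ssum v + p * (ε / (p+1)) := by
          rw [Finset.sum_add_distrib]; simp [Ssum, Finset.card_univ, mul_comm]
      _ ≤ aa T x + ε := by
          have h2 : Ssum v ≤ aa T x := ssum_le_aa hv
          have : (p : ℝ) * (ε / (p+1)) ≤ ε := by
            rw [mul_div_assoc']
            rw [div_le_iff₀ (by positivity)]
            nlinarith [Nat.cast_nonneg (α := ℝ) p]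
          linarith
  · apply csSup_le (hE.image _)
    rintro t ⟨v, hv, rfl⟩
    exact Finset.sum_le_sum fun i _ => le_Gm hT hne hv i

lemma sum_Gp {x : ℝ} (hF : (Fx T x).Nonempty) : ∑ i, Gp T i x = bb T x := by
  apply le_antisymm
  · apply le_csInf (hF.image _)
    rintro t ⟨v, hv, rfl⟩
    exact Finset.sum_le_sum fun i _ => Gp_le hT hne hv i
  · apply le_of_forall_pos_le_add
    intro ε hε
    have hεp : 0 < ε / (p + 1) := by positivity
    obtain ⟨s, ⟨v, hv, rfl⟩, hs⟩ :=
      exists_lt_of_csInf_lt (hF.image Ssum) (show bb T x < bb T x + ε / (p+1) by linarith)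
    have hGle : ∀ i, v i - ε / (p+1) ≤ Gp T i x := by
      intro i
      apply le_csInf (hF.image _)
      rintro t ⟨w, hw, rfl⟩
      rcases le_total (Ssum v) (Ssum w) with h | h
      · have := (hT v hv.1 w hw.1 h i).1; linarith
      · have := (hT w hw.1 v hv.1 h i).2
        have h2 : bb T x ≤ Ssum w := bb_le_ssum hw
        linarith
    have : ∑ i : Fin p, (v i - ε / (p+1)) ≤ ∑ i, Gp T i x :=
      Finset.sum_le_sum fun i _ => hGle i
    have h3 : ∑ i : Fin p, (v i - ε / (p+1)) = Ssum v - p * (ε / (p+1)) := by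
      rw [Finset.sum_sub_distrib]; simp [Ssum, Finset.card_univ, mul_comm]
    have h4 : bb T x ≤ Ssum v := bb_le_ssum hv
    have h5 : (p : ℝ) * (ε / (p+1)) ≤ ε := by
      rw [mul_div_assoc', div_le_iff₀ (by positivity)]
      nlinarith [Nat.cast_nonneg (α := ℝ) p]
    linarith

lemma GpGm_le {x : ℝ} (hE : (Ex T x).Nonempty) (hF : (Fx T x).Nonempty) (i : Fin p) :
    Gp T i x - Gm T i x ≤ bb T x - aa T x := by
  have h0 : aa T x ≤ bb T x := le_trans (aa_le hE) (le_bb hF)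
  apply le_of_forall_pos_le_add
  intro ε hε
  obtain ⟨s, ⟨v, hv, rfl⟩, hs⟩ :=
    exists_lt_of_lt_csSup (hE.image Ssum) (show aa T x - ε/2 < aa T x by linarith)
  obtain ⟨t, ⟨w, hw, rfl⟩, ht⟩ :=
    exists_lt_of_csInf_lt (hF.image Ssum) (show bb T x < bb T x + ε/2 by linarith)
  have h1 : Gm T i x ≥ v i := le_Gm hT hne hv i
  have h2 : Gp T i x ≤ w i := Gp_le hT hne hw i
  have h3 := (hT v hv.1 w hw.1 (le_trans hv.2 hw.2) i).2
  linarith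

/-- the key cross-gap estimate -/
lemma Gm_sub_Gp_le {x y : ℝ} (hFx : (Fx T x).Nonempty) (hEy : (Ex T y).Nonempty)
    (hab : bb T x ≤ aa T y) (i : Fin p) :
    Gm T i y - Gp T i x ≤ aa T y - bb T x := by
  apply le_of_forall_pos_le_add
  intro ε hε
  obtain ⟨s, ⟨w, hw, rfl⟩, hs⟩ :=
    exists_lt_of_lt_csSup (hEy.image Ssum) (show aa T y - ε/2 < aa T y by linarith)
  obtain ⟨t, ⟨u, hu, rfl⟩, ht⟩ :=
    exists_lt_of_csInf_lt (hFx.image Ssum) (show bb T x < bb T x + ε/2 by linarith)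
  have h1 : Gm T i y ≤ w i + ε/2 := by
    apply csSup_le (hEy.image _)
    rintro t ⟨w', hw', rfl⟩
    rcases le_total (Ssum w') (Ssum w) with h | h
    · have := (hT w' hw'.1 w hw.1 h i).1; linarith
    · have := (hT w hw.1 w' hw'.1 h i).2
      have h2 : Ssum w' ≤ aa T y := ssum_le_aa hw'
      linarith
  have h2 : u i - ε/2 ≤ Gp T i x := by
    apply le_csInf (hFx.image _)
    rintro t ⟨u', hu', rfl⟩
    rcases le_total (Ssum u) (Ssum u') with h | h
    · have := (hT u hu.1 u' hu'.1 h i).1; linarith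
    · have := (hT u' hu'.1 u hu.1 h i).2
      have h3 : bb T x ≤ Ssum u' := bb_le_ssum hu'
      linarith
  have h4 : Ssum w ≤ aa T y := ssum_le_aa hw
  have h5 : bb T x ≤ Ssum u := bb_le_ssum hu
  have h6 : w i - u i ≤ aa T y - bb T x := by
    rcases le_total (Ssum u) (Ssum w) with h | h
    · have := (hT u hu.1 w hw.1 h i).2; linarith
    · have := (hT w hw.1 u hu.1 h i).1; linarith
  linarith

end WithStar

set_option linter.unusedSectionVars false

section WithStar2
variable (hT : Star T) (hne : T.Nonempty) (hp : 0 < p)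
include hT hne hp

omit hp in
lemma ff_eval {v : Fin p → ℝ} (hv : v ∈ T) (i : Fin p) : ff T i (Ssum v) = v i := by
  set x := Ssum v with hx
  have hvE : v ∈ Ex T x := ⟨hv, le_refl _⟩
  have hvF : v ∈ Fx T x := ⟨hv, le_refl _⟩
  have hE : (Ex T x).Nonempty := ⟨v, hvE⟩
  have hF : (Fx T x).Nonempty := ⟨v, hvF⟩
  have haax : aa T x = x := le_antisymm (aa_le hE) (ssum_le_aa hvE)
  have hbbx : bb T x = x := le_antisymm (bb_le_ssum hvF) (le_bb hF)
  have hGm : Gm T i x = v i := by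
    apply le_antisymm
    · apply csSup_le (hE.image _)
      rintro t ⟨w, hw, rfl⟩
      exact (hT w hw.1 v hv hw.2 i).1
    · exact le_Gm hT hne hvE i
  rw [ff, if_pos hE, if_pos hF, if_pos (haax.trans hbbx.symm), hGm]

lemma ff_sandwich_F {x : ℝ} (hF : (Fx T x).Nonempty) (i : Fin p) :
    ff T i x ≤ Gp T i x ∧ Gp T i x - ff T i x ≤ bb T x - x := by
  by_cases hE : (Ex T x).Nonempty
  · have hax : aa T x ≤ x := aa_le hE
    have hxb : x ≤ bb T x := le_bb hF
    have hMm : Gm T i x ≤ Gp T i x := Gm_le_Gp hT hne hE hF i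
    have hD : Gp T i x - Gm T i x ≤ bb T x - aa T x := GpGm_le hT hne hE hF i
    by_cases hab : aa T x = bb T x
    · have hxa : x = aa T x := le_antisymm (hab ▸ hxb) hax
      rw [ff, if_pos hE, if_pos hF, if_pos hab]
      exact ⟨hMm, by linarith⟩
    · have hBpos : 0 < bb T x - aa T x := by
        rcases lt_or_eq_of_le (le_trans hax hxb) with h | h
        · linarith
        · exact absurd h hab
      rw [ff, if_pos hE, if_pos hF, if_neg hab]
      have key : Gp T i x - (Gm T i x + (x - aa T x) * (Gp T i x - Gm T i x) / (bb T x - aa T x))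
          = (Gp T i x - Gm T i x) * (bb T x - x) / (bb T x - aa T x) := by
        field_simp
        ring
      constructor
      · have h1 : 0 ≤ (Gp T i x - Gm T i x) * (bb T x - x) / (bb T x - aa T x) := by
          apply div_nonneg _ (le_of_lt hBpos)
          apply mul_nonneg <;> linarith
        linarith [key ▸ h1]
      · rw [key, div_le_iff₀ hBpos]
        nlinarith
  · rw [ff, if_neg hE]
    have hxb : x ≤ bb T x := le_bb hF
    have hp1 : (1:ℝ) ≤ p := by exact_mod_cast hp
    constructor
    · have : (x - bb T x) / p ≤ 0 := div_nonpos_of_nonpos_of_nonneg (by linarith) (by linarith)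
      linarith
    · have h1 : 0 ≤ (bb T x - x) / p := div_nonneg (by linarith) (by linarith)
      have h2 : (bb T x - x) / p ≤ bb T x - x := div_le_self (by linarith) hp1
      have : Gp T i x - (Gp T i x + (x - bb T x) / p) = (bb T x - x) / p := by ring
      linarith [this]

lemma ff_sandwich_E {x : ℝ} (hE : (Ex T x).Nonempty) (i : Fin p) :
    Gm T i x ≤ ff T i x ∧ ff T i x - Gm T i x ≤ x - aa T x := by
  have hax : aa T x ≤ x := aa_le hE
  by_cases hF : (Fx T x).Nonempty
  · have hxb : x ≤ bb T x := le_bb hF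
    have hMm : Gm T i x ≤ Gp T i x := Gm_le_Gp hT hne hE hF i
    have hD : Gp T i x - Gm T i x ≤ bb T x - aa T x := GpGm_le hT hne hE hF i
    by_cases hab : aa T x = bb T x
    · have hxa : x = aa T x := le_antisymm (hab ▸ hxb) hax
      rw [ff, if_pos hE, if_pos hF, if_pos hab]
      constructor
      · exact le_refl _
      · linarith
    · have hBpos : 0 < bb T x - aa T x := by
        rcases lt_or_eq_of_le (le_trans hax hxb) with h | h
        · linarith
        · exact absurd h hab
      rw [ff, if_pos hE, if_pos hF, if_neg hab]
      constructor
      · have : 0 ≤ (x - aa T x) * (Gp T i x - Gm T i x) / (bb T x - aa T x) := by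
          apply div_nonneg _ (le_of_lt hBpos)
          apply mul_nonneg <;> linarith
        linarith
      · have h1 : (x - aa T x) * (Gp T i x - Gm T i x) / (bb T x - aa T x) ≤ x - aa T x := by
          rw [div_le_iff₀ hBpos]
          nlinarith
        linarith
  · rw [ff, if_pos hE, if_neg hF]
    have hp1 : (1:ℝ) ≤ p := by exact_mod_cast hp
    constructor
    · have : 0 ≤ (x - aa T x) / p := div_nonneg (by linarith) (by linarith)
      linarith
    · have : (x - aa T x) / p ≤ x - aa T x := div_le_self (by linarith) hp1
      linarith


lemma ff_increment {x y : ℝ} (hxy : x ≤ y) (i : Fin p) :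
    ff T i x ≤ ff T i y ∧ ff T i y - ff T i x ≤ y - x := by
  by_cases hmid : ∃ v ∈ T, x ≤ Ssum v ∧ Ssum v ≤ y
  · obtain ⟨v, hv, hvx, hvy⟩ := hmid
    have hFx : (Fx T x).Nonempty := ⟨v, hv, hvx⟩
    have hEy : (Ex T y).Nonempty := ⟨v, hv, hvy⟩
    have hab : bb T x ≤ aa T y :=
      le_trans (bb_le_ssum (⟨hv, hvx⟩ : v ∈ Fx T x)) (ssum_le_aa (⟨hv, hvy⟩ : v ∈ Ex T y))
    have L1 := ff_sandwich_F hT hne hp hFx i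
    have L2 := ff_sandwich_E hT hne hp hEy i
    have L3 := Gm_sub_Gp_le hT hne hFx hEy hab i
    constructor
    · calc ff T i x ≤ Gp T i x := L1.1
        _ ≤ v i := Gp_le hT hne ⟨hv, hvx⟩ i
        _ ≤ Gm T i y := le_Gm hT hne ⟨hv, hvy⟩ i
        _ ≤ ff T i y := L2.1
    · have hxbb : x ≤ bb T x := le_bb hFx
      have haay : aa T y ≤ y := aa_le hEy
      linarith [L1.2, L2.2]
  · push_neg at hmid
    have hEeq : Ex T x = Ex T y := by
      ext v
      constructor
      · rintro ⟨hv, hs⟩; exact ⟨hv, le_trans hs hxy⟩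
      · rintro ⟨hv, hs⟩
        refine ⟨hv, ?_⟩
        by_contra hc
        push_neg at hc
        exact absurd hs (not_le.2 (hmid v hv (le_of_lt hc)))
    have hFeq : Fx T x = Fx T y := by
      ext v
      constructor
      · rintro ⟨hv, hs⟩
        refine ⟨hv, ?_⟩
        by_contra hc
        push_neg at hc
        exact absurd (hmid v hv hs) (not_lt.2 (le_of_lt hc))
      · rintro ⟨hv, hs⟩; exact ⟨hv, le_trans hxy hs⟩
    have hGmeq : Gm T i x = Gm T i y := by rw [Gm, Gm, hEeq]
    have hGpeq : Gp T i x = Gp T i y := by rw [Gp, Gp, hFeq]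
    have haaeq : aa T x = aa T y := by rw [aa, aa, hEeq]
    have hbbeq : bb T x = bb T y := by rw [bb, bb, hFeq]
    have hp1 : (1:ℝ) ≤ p := by exact_mod_cast hp
    rcases eq_or_lt_of_le hxy with rfl | hlt
    · exact ⟨le_refl _, by linarith⟩
    by_cases hE : (Ex T x).Nonempty
    · by_cases hF : (Fx T y).Nonempty
      · have hEy : (Ex T y).Nonempty := hEeq ▸ hE
        have hFx : (Fx T x).Nonempty := hFeq ▸ hF
        have hax : aa T x ≤ x := aa_le hE
        have hyb : y ≤ bb T y := le_bb hF
        have hxbb : x ≤ bb T x := le_bb hFx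
        have hab : aa T x ≠ bb T x := by
          intro h
          linarith
        have haby : aa T y ≠ bb T y := by rw [← haaeq, ← hbbeq]; exact hab
        have hBpos : 0 < bb T x - aa T x := by
          rcases lt_or_eq_of_le (le_trans hax hxbb) with h | h
          · linarith
          · exact absurd h hab
        have hD0 : 0 ≤ Gp T i x - Gm T i x := sub_nonneg.2 (Gm_le_Gp hT hne hE hFx i)
        have hDB : Gp T i x - Gm T i x ≤ bb T x - aa T x := GpGm_le hT hne hE hFx i
        rw [ff, if_pos hE, if_pos hFx, if_neg hab, ff, if_pos hEy, if_pos hF, if_neg haby,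
          ← hGmeq, ← hGpeq, ← haaeq, ← hbbeq]
        have key : (Gm T i x + (y - aa T x) * (Gp T i x - Gm T i x) / (bb T x - aa T x))
            - (Gm T i x + (x - aa T x) * (Gp T i x - Gm T i x) / (bb T x - aa T x))
            = (y - x) * (Gp T i x - Gm T i x) / (bb T x - aa T x) := by
          field_simp
          ring
        have h1 : 0 ≤ (y - x) * (Gp T i x - Gm T i x) / (bb T x - aa T x) :=
          div_nonneg (mul_nonneg (by linarith) hD0) hBpos.le
        have h2 : (y - x) * (Gp T i x - Gm T i x) / (bb T x - aa T x) ≤ y - x := by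
          rw [div_le_iff₀ hBpos]
          nlinarith
        exact ⟨by linarith, by linarith⟩
      · have hFxe : ¬ (Fx T x).Nonempty := by rw [hFeq]; exact hF
        rw [ff, if_pos hE, if_neg hFxe, ff, if_pos (hEeq ▸ hE), if_neg hF, ← haaeq, ← hGmeq]
        have key : (Gm T i x + (y - aa T x) / p) - (Gm T i x + (x - aa T x) / p)
            = (y - x) / p := by ring
        have h1 : 0 ≤ (y - x) / (p:ℝ) := div_nonneg (by linarith) (by linarith)
        have h2 : (y - x) / (p:ℝ) ≤ y - x := div_le_self (by linarith) hp1
        exact ⟨by linarith, by linarith⟩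
    · have hEye : ¬ (Ex T y).Nonempty := by rw [← hEeq]; exact hE
      rw [ff, if_neg hE, ff, if_neg hEye, ← hbbeq, ← hGpeq]
      have key : (Gp T i x + (y - bb T x) / p) - (Gp T i x + (x - bb T x) / p)
          = (y - x) / p := by ring
      have h1 : 0 ≤ (y - x) / (p:ℝ) := div_nonneg (by linarith) (by linarith)
      have h2 : (y - x) / (p:ℝ) ≤ y - x := div_le_self (by linarith) hp1
      exact ⟨by linarith, by linarith⟩

lemma sum_ff (x : ℝ) : ∑ i, ff T i x = x := by
  have hpR : (0:ℝ) < p := by exact_mod_cast hp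
  by_cases hE : (Ex T x).Nonempty
  · by_cases hF : (Fx T x).Nonempty
    · by_cases hab : aa T x = bb T x
      · have hxa : x = aa T x := le_antisymm (hab ▸ le_bb hF) (aa_le hE)
        have : ∀ i, ff T i x = Gm T i x := fun i => by rw [ff, if_pos hE, if_pos hF, if_pos hab]
        simp only [this]
        rw [sum_Gm hT hne hE, ← hxa]
      · have hBpos : 0 < bb T x - aa T x := by
          rcases lt_or_eq_of_le (le_trans (aa_le hE) (le_bb hF)) with h | h
          · linarith
          · exact absurd h hab
        have : ∀ i, ff T i x = Gm T i x + (x - aa T x) * (Gp T i x - Gm T i x) / (bb T x - aa T x) :=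
          fun i => by rw [ff, if_pos hE, if_pos hF, if_neg hab]
        simp only [this]
        rw [Finset.sum_add_distrib, sum_Gm hT hne hE]
        have : ∑ i, (x - aa T x) * (Gp T i x - Gm T i x) / (bb T x - aa T x)
            = (x - aa T x) * (∑ i, (Gp T i x - Gm T i x)) / (bb T x - aa T x) := by
          rw [Finset.mul_sum, Finset.sum_div]
        rw [this, Finset.sum_sub_distrib, sum_Gp hT hne hF, sum_Gm hT hne hE]
        field_simp
        ring
    · have : ∀ i, ff T i x = Gm T i x + (x - aa T x) / p :=
        fun i => by rw [ff, if_pos hE, if_neg hF]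
      simp only [this]
      rw [Finset.sum_add_distrib, sum_Gm hT hne hE, Finset.sum_const, Finset.card_univ,
        Fintype.card_fin, nsmul_eq_mul]
      field_simp
      ring
  · have hF : (Fx T x).Nonempty := by
      obtain ⟨v, hv⟩ := hne
      refine ⟨v, hv, ?_⟩
      by_contra hc
      push_neg at hc
      exact hE ⟨v, hv, le_of_lt hc⟩
    have : ∀ i, ff T i x = Gp T i x + (x - bb T x) / p := fun i => by rw [ff, if_neg hE]
    simp only [this]
    rw [Finset.sum_add_distrib, sum_Gp hT hne hF, Finset.sum_const, Finset.card_univ,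
      Fintype.card_fin, nsmul_eq_mul]
    field_simp
    ring

theorem core_extension :
    ∃ f : Fin p → ℝ → ℝ, (∀ i, Monotone (f i)) ∧ (∀ i, LipschitzWith 1 (f i)) ∧
      (∀ x, ∑ i, f i x = x) ∧ (∀ v ∈ T, ∀ i, f i (Ssum v) = v i) := by
  refine ⟨ff T, ?_, ?_, sum_ff hT hne hp, fun v hv i => ff_eval hT hne hv i⟩
  · intro i x y hxy
    exact (ff_increment hT hne hp hxy i).1
  · intro i
    apply LipschitzWith.of_dist_le_mul
    intro x y
    rw [NNReal.coe_one, one_mul, Real.dist_eq, Real.dist_eq]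
    rcases le_total x y with h | h
    · have := ff_increment hT hne hp h i
      rw [abs_sub_comm, abs_of_nonneg (by linarith [this.1]), abs_of_nonpos (by linarith)]
      linarith [this.2]
    · have := ff_increment hT hne hp h i
      rw [abs_of_nonneg (by linarith [this.1]), abs_of_nonneg (by linarith)]
      linarith [this.2]

end WithStar2
lemma star_of_pair {T : Set (Fin p → ℝ)}
    (h : ∀ v ∈ T, ∀ w ∈ T, ∀ i j, 0 ≤ (v i - w i) * (v j - w j)) : Star T := by
  intro v hv w hw hs i
  have hle : ∀ j, v j ≤ w j := by
    intro j
    by_contra hj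
    push_neg at hj   -- w j < v j
    have hall : ∀ k, w k ≤ v k := by
      intro k
      by_contra hk
      push_neg at hk  -- v k < w k
      have := h v hv w hw j k
      nlinarith
    have hsum : Ssum w ≤ Ssum v := Finset.sum_le_sum fun k _ => hall k
    have heq : Ssum v = Ssum w := le_antisymm hs hsum
    have hpos : 0 < ∑ k, (v k - w k) :=
      Finset.sum_pos' (fun k _ => sub_nonneg.2 (hall k)) ⟨j, Finset.mem_univ j, by linarith⟩
    have : ∑ k, (v k - w k) = Ssum v - Ssum w := by
      simp [Ssum, Finset.sum_sub_distrib]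
    rw [this, heq] at hpos
    simp at hpos
  refine ⟨hle i, ?_⟩
  have : Ssum w - Ssum v = ∑ k, (w k - v k) := by
    simp [Ssum, Finset.sum_sub_distrib]
  rw [this]
  exact Finset.single_le_sum (f := fun k => w k - v k)
    (fun k _ => sub_nonneg.2 (hle k)) (Finset.mem_univ i)


end Stmt8Aux

open MeasureTheory

/-- a family is comonotone iff each member is a nondecreasing
1-Lipschitz function of the sum, the functions summing to the identity. -/
theorem stmt8 {Ω : Type*} [MeasurableSpace Ω] (μ : Measure Ω) [IsProbabilityMeasure μ]
    {p : ℕ} (hp : 0 < p) (X : Fin p → Ω → ℝ) (hm : ∀ i, Measurable (X i)) :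
    (∀ i j, Comonotone μ (X i) (X j)) ↔
    ∃ f : Fin p → ℝ → ℝ,
      (∀ i, Monotone (f i)) ∧ (∀ i, LipschitzWith 1 (f i)) ∧
      (∀ x : ℝ, ∑ i, f i x = x) ∧
      (∀ i, X i =ᵐ[μ] fun ω => f i (∑ j, X j ω)) := by
  constructor
  · intro h
    have hae : ∀ᵐ q ∂(μ.prod μ), ∀ i j, 0 ≤ (X i q.1 - X i q.2) * (X j q.1 - X j q.2) := by
      rw [ae_all_iff]
      intro i
      rw [ae_all_iff]
      exact h i
    set V : Ω → (Fin p → ℝ) := fun ω i => X i ω with hVdef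
    have hVm : Measurable V := measurable_pi_lambda _ hm
    set ν : Measure (Fin p → ℝ) := μ.map V with hνdef
    have hνprob : IsProbabilityMeasure ν := Measure.isProbabilityMeasure_map hVm.aemeasurable
    set NN : Set (Set (Fin p → ℝ)) := {U | IsOpen U ∧ ν U = 0} with hNNdef
    obtain ⟨C, hCc, hCsub, hCun⟩ := TopologicalSpace.isOpen_sUnion_countable NN (fun s hs => hs.1)
    set N : Set (Fin p → ℝ) := ⋃₀ NN with hNdef
    have hNopen : IsOpen N := isOpen_sUnion (fun s hs => hs.1)
    have hNnull : ν N = 0 := by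
      rw [← hCun, measure_sUnion_null_iff hCc]
      exact fun s hs => (hCsub hs).2
    set T : Set (Fin p → ℝ) := Nᶜ with hTdef
    have hTfull : ν Nᶜ = 1 := by
      have := measure_compl (μ := ν) hNopen.measurableSet (by simp [hNnull])
      rw [this, hNnull, measure_univ]
      simp
    have hTne : T.Nonempty := by
      rw [Set.nonempty_iff_ne_empty]
      intro hc
      rw [hTdef] at hc
      rw [hc] at hTfull
      simp at hTfull
    have hbadmeas : MeasurableSet {q : (Fin p → ℝ) × (Fin p → ℝ) |
        ∀ i j, 0 ≤ (q.1 i - q.2 i) * (q.1 j - q.2 j)} := by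
      have : {q : (Fin p → ℝ) × (Fin p → ℝ) | ∀ i j, 0 ≤ (q.1 i - q.2 i) * (q.1 j - q.2 j)}
          = ⋂ i, ⋂ j, {q : (Fin p → ℝ) × (Fin p → ℝ) | 0 ≤ (q.1 i - q.2 i) * (q.1 j - q.2 j)} := by
        ext q; simp
      rw [this]
      refine MeasurableSet.iInter fun i => MeasurableSet.iInter fun j => ?_
      apply measurableSet_le measurable_const
      exact ((measurable_fst.eval.sub measurable_snd.eval).mul
        (measurable_fst.eval.sub measurable_snd.eval))
    have hbadnull : (ν.prod ν) {q : (Fin p → ℝ) × (Fin p → ℝ) |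
        ¬ ∀ i j, 0 ≤ (q.1 i - q.2 i) * (q.1 j - q.2 j)} = 0 := by
      have hc : {q : (Fin p → ℝ) × (Fin p → ℝ) |
          ¬ ∀ i j, 0 ≤ (q.1 i - q.2 i) * (q.1 j - q.2 j)}
          = {q : (Fin p → ℝ) × (Fin p → ℝ) |
          ∀ i j, 0 ≤ (q.1 i - q.2 i) * (q.1 j - q.2 j)}ᶜ := rfl
      rw [hc, hνdef, Measure.map_prod_map _ _ hVm hVm,
        Measure.map_apply (hVm.prodMap hVm) hbadmeas.compl]
      have : Prod.map V V ⁻¹' {q : (Fin p → ℝ) × (Fin p → ℝ) |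
          ∀ i j, 0 ≤ (q.1 i - q.2 i) * (q.1 j - q.2 j)}ᶜ
          = {q : Ω × Ω | ¬ ∀ i j, 0 ≤ (X i q.1 - X i q.2) * (X j q.1 - X j q.2)} := by
        ext q
        simp [hVdef]
      rw [this]
      exact hae
    have hTpair : ∀ v ∈ T, ∀ w ∈ T, ∀ i j, 0 ≤ (v i - w i) * (v j - w j) := by
      intro v hv w hw i j
      by_contra hneg
      push_neg at hneg
      have hg : Continuous fun q : (Fin p → ℝ) × (Fin p → ℝ) =>
          (q.1 i - q.2 i) * (q.1 j - q.2 j) := by fun_prop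
      have hWopen : IsOpen {q : (Fin p → ℝ) × (Fin p → ℝ) |
          (q.1 i - q.2 i) * (q.1 j - q.2 j) < 0} := isOpen_lt hg continuous_const
      obtain ⟨U1, U2, hU1, hU2, hv1, hw2, hsub⟩ := isOpen_prod_iff.mp hWopen v w hneg
      have h1 : ν U1 ≠ 0 := by
        intro h0
        exact hv (Set.mem_sUnion.2 ⟨U1, ⟨hU1, h0⟩, hv1⟩)
      have h2 : ν U2 ≠ 0 := by
        intro h0
        exact hw (Set.mem_sUnion.2 ⟨U2, ⟨hU2, h0⟩, hw2⟩)
      have hz : (ν.prod ν) (U1 ×ˢ U2) = 0 := by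
        apply measure_mono_null _ hbadnull
        intro q hq
        have := hsub hq
        simp only [Set.mem_setOf_eq] at this ⊢
        intro hall
        exact absurd (hall i j) (not_le.2 this)
      rw [Measure.prod_prod] at hz
      exact absurd hz (mul_ne_zero h1 h2)
    have hstar : Stmt8Aux.Star T := Stmt8Aux.star_of_pair hTpair
    obtain ⟨f, hmono, hlip, hsum, hval⟩ := Stmt8Aux.core_extension hstar hTne hp
    refine ⟨f, hmono, hlip, hsum, ?_⟩
    intro i
    have hVT : ∀ᵐ ω ∂μ, V ω ∈ T := by
      rw [ae_iff]
      have : {ω | ¬ V ω ∈ T} = V ⁻¹' N := by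
        ext ω
        simp [hTdef]
      rw [this, ← Measure.map_apply hVm hNopen.measurableSet]
      exact hNnull
    filter_upwards [hVT] with ω hω
    exact (hval (V ω) hω i).symm
  · rintro ⟨f, hmono, hlip, hsum, haef⟩ i j
    have hfull : ∀ᵐ ω ∂μ, X i ω = f i (∑ k, X k ω) ∧ X j ω = f j (∑ k, X k ω) :=
      (haef i).and (haef j)
    set E : Set Ω := {ω | ¬ (X i ω = f i (∑ k, X k ω) ∧ X j ω = f j (∑ k, X k ω))} with hEdef
    have hEnull : μ E = 0 := by
      rw [hEdef, ← ae_iff]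
      exact hfull
    have h1 : (μ.prod μ) {q : Ω × Ω | q.1 ∈ E} = 0 := by
      have : {q : Ω × Ω | q.1 ∈ E} = E ×ˢ Set.univ := by ext q; simp
      rw [this, Measure.prod_prod, hEnull, zero_mul]
    have h2 : (μ.prod μ) {q : Ω × Ω | q.2 ∈ E} = 0 := by
      have : {q : Ω × Ω | q.2 ∈ E} = Set.univ ×ˢ E := by ext q; simp
      rw [this, Measure.prod_prod, hEnull, mul_zero]
    have hg1 : ∀ᵐ q ∂(μ.prod μ), q.1 ∉ E := by
      rw [ae_iff]
      simpa using h1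
    have hg2 : ∀ᵐ q ∂(μ.prod μ), q.2 ∉ E := by
      rw [ae_iff]
      simpa using h2
    filter_upwards [hg1, hg2] with q hq1 hq2
    rw [hEdef, Set.mem_setOf_eq, not_not] at hq1 hq2
    rw [hq1.1, hq1.2, hq2.1, hq2.2]
    rcases le_total (∑ k, X k q.2) (∑ k, X k q.1) with hS | hS
    · have a1 := hmono i hS
      have a2 := hmono j hS
      nlinarith
    · have a1 := hmono i hS
      have a2 := hmono j hS
      nlinarith
end

section
/- Let X be a bounded real random variable and (X₁,...,X_p) a comonotone allocation of X (Σᵢ Xᵢ = X, Xᵢ = fᵢ(X) with fᵢ nondecreasing 1-Lipschitz summing to the identity). Write φᵢ(x) := ∫₀^x fᵢ(s) ds and ψᵢ := φᵢ*, the Legendre transform of φᵢ. Then each ψᵢ is strictly convex and continuous, X ∈ ∂ψᵢ(Xᵢ) a.s. for every i, and (X₁,...,X_p) minimizes E[Σᵢ ψᵢ(Yᵢ)] over all allocations (Y₁,...,Y_p) with Σᵢ Yᵢ = X. -/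
open MeasureTheory Filter Topology

/-- Legendre transform (convex conjugate) of a function on ℝ. -/
noncomputable def legendre (φ : ℝ → ℝ) (x : ℝ) : ℝ :=
  sSup (Set.range fun y => x * y - φ y)

namespace Stmt10Aux

/-- φ(x) = ∫₀^x f -/
noncomputable def phi (f : ℝ → ℝ) : ℝ → ℝ := fun x => ∫ s in (0:ℝ)..x, f s

variable {f : ℝ → ℝ}

lemma phi_sub (hc : Continuous f) (a b : ℝ) :
    phi f b - phi f a = ∫ s in a..b, f s := by
  have h1 : IntervalIntegrable f volume 0 a := hc.intervalIntegrable _ _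
  have h2 : IntervalIntegrable f volume a b := hc.intervalIntegrable _ _
  have := intervalIntegral.integral_add_adjacent_intervals h1 h2
  simp only [phi]
  linarith

lemma gradIneq (hm : Monotone f) (hc : Continuous f) (x y : ℝ) :
    f x * (y - x) ≤ phi f y - phi f x := by
  rw [phi_sub hc]
  rcases le_total x y with h | h
  · have h0 : (∫ _ in x..y, f x) ≤ ∫ s in x..y, f s :=
      intervalIntegral.integral_mono_on h intervalIntegrable_const
        (hc.intervalIntegrable _ _) (fun s hs => hm hs.1)
    rw [intervalIntegral.integral_const, smul_eq_mul] at h0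
    nlinarith
  · have h0 : (∫ s in y..x, f s) ≤ ∫ _ in y..x, f x :=
      intervalIntegral.integral_mono_on h (hc.intervalIntegrable _ _)
        intervalIntegrable_const (fun s hs => hm hs.2)
    rw [intervalIntegral.integral_const, smul_eq_mul] at h0
    rw [intervalIntegral.integral_symm y x]
    nlinarith

lemma bdd (hm : Monotone f) (hc : Continuous f) (x : ℝ) :
    BddAbove (Set.range fun y => f x * y - phi f y) := by
  refine ⟨f x * x - phi f x, ?_⟩
  rintro _ ⟨y, rfl⟩
  show f x * y - phi f y ≤ f x * x - phi f x
  have := gradIneq hm hc x y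
  nlinarith

lemma legendre_at (hm : Monotone f) (hc : Continuous f) (x : ℝ) :
    legendre (phi f) (f x) = f x * x - phi f x := by
  apply le_antisymm
  · apply csSup_le (Set.range_nonempty _)
    rintro _ ⟨y, rfl⟩
    show f x * y - phi f y ≤ f x * x - phi f x
    have := gradIneq hm hc x y
    nlinarith
  · exact le_csSup (bdd hm hc x) ⟨x, rfl⟩

lemma fenchel (hm : Monotone f) (hc : Continuous f) (hs : Function.Surjective f)
    (z y : ℝ) : z * y - phi f y ≤ legendre (phi f) z := by
  obtain ⟨x, rfl⟩ := hs z
  exact le_csSup (bdd hm hc x) ⟨y, rfl⟩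

lemma eq_case (hm : Monotone f) (hc : Continuous f) {x w : ℝ}
    (h : ∀ y, x * y - phi f y ≤ x * w - phi f w) : x = f w := by
  have key : ∀ u, x * (u - w) ≤ f u * (u - w) := by
    intro u
    have h1 := h u
    have h2 := gradIneq hm hc u w
    nlinarith
  have hle : x ≤ f w := by
    have hev : ∀ u ∈ Set.Ioi w, x ≤ f u := by
      intro u hu
      have hk := key u
      have huw : (0:ℝ) < u - w := sub_pos.2 hu
      nlinarith
    have ht : Filter.Tendsto f (nhdsWithin w (Set.Ioi w)) (nhds (f w)) :=
      (hc.tendsto w).mono_left nhdsWithin_le_nhds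
    exact ge_of_tendsto ht (eventually_nhdsWithin_of_forall hev)
  have hge : f w ≤ x := by
    have hev : ∀ u ∈ Set.Iio w, f u ≤ x := by
      intro u hu
      have hk := key u
      have huw : u - w < (0:ℝ) := sub_neg.2 hu
      nlinarith
    have ht : Filter.Tendsto f (nhdsWithin w (Set.Iio w)) (nhds (f w)) :=
      (hc.tendsto w).mono_left nhdsWithin_le_nhds
    exact le_of_tendsto ht (eventually_nhdsWithin_of_forall hev)
  linarith

lemma surj (hc : Continuous f) {p : ℕ} (hp : 0 < p) {m M : ℝ}
    (hM : ∀ x ≥ M, f x = f M + (x - M) / p) (hm : ∀ x ≤ m, f x = f m + (x - m) / p) :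
    Function.Surjective f := by
  have hp' : (0:ℝ) < p := by exact_mod_cast hp
  have ht : Tendsto f atTop atTop := by
    have h1 : Tendsto (fun x : ℝ => f M + (x - M) / p) atTop atTop := by
      apply tendsto_atTop_add_const_left
      exact (tendsto_atTop_add_const_right atTop (-M) tendsto_id).atTop_div_const hp'
    exact h1.congr' ((eventually_ge_atTop M).mono fun x hx => (hM x hx).symm)
  have hb : Tendsto f atBot atBot := by
    have h1 : Tendsto (fun x : ℝ => f m + (x - m) / p) atBot atBot := by
      apply tendsto_atBot_add_const_left
      exact (tendsto_atBot_add_const_right atBot (-m) tendsto_id).atBot_div_const hp'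
    exact h1.congr' ((eventually_le_atBot m).mono fun x hx => (hm x hx).symm)
  exact hc.surjective ht hb

lemma strictconv (hm : Monotone f) (hc : Continuous f) (hs : Function.Surjective f) :
    StrictConvexOn ℝ Set.univ (legendre (phi f)) := by
  refine ⟨convex_univ, fun z1 _ z2 _ hne a b ha hb hab => ?_⟩
  obtain ⟨w, hw⟩ := hs (a * z1 + b * z2)
  have hz : legendre (phi f) (a • z1 + b • z2) = (a * z1 + b * z2) * w - phi f w := by
    rw [smul_eq_mul, smul_eq_mul, ← hw, legendre_at hm hc, hw]
  have key : ∀ z : ℝ, z ≠ a * z1 + b * z2 →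
      z * w - phi f w < legendre (phi f) z := by
    intro z hzne
    rcases lt_or_eq_of_le (fenchel hm hc hs z w) with h | h
    · exact h
    · exfalso
      apply hzne
      rw [← hw]
      refine eq_case hm hc fun y => ?_
      calc z * y - phi f y ≤ legendre (phi f) z := fenchel hm hc hs z y
        _ = z * w - phi f w := h.symm
  have hz1 : z1 ≠ a * z1 + b * z2 := by
    intro h
    apply hne
    have hbz : b * z1 = b * z2 := by linear_combination h + z1 * hab
    exact mul_left_cancel₀ (ne_of_gt hb) hbz
  have hz2 : z2 ≠ a * z1 + b * z2 := by
    intro h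
    apply hne
    have haz : a * z1 = a * z2 := by linear_combination -h - z2 * hab
    exact (mul_left_cancel₀ (ne_of_gt ha) haz)
  have k1 := key z1 hz1
  have k2 := key z2 hz2
  rw [hz]
  simp only [smul_eq_mul]
  have s1 := mul_lt_mul_of_pos_left k1 ha
  have s2 := mul_lt_mul_of_pos_left k2 hb
  calc (a * z1 + b * z2) * w - phi f w
      = a * (z1 * w - phi f w) + b * (z2 * w - phi f w) := by
        linear_combination (phi f w) * hab
    _ < a * legendre (phi f) z1 + b * legendre (phi f) z2 := by nlinarith

end Stmt10Aux

open Stmt10Aux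

theorem stmt10 {Ω : Type*} [MeasurableSpace Ω] (μ : Measure Ω) [IsProbabilityMeasure μ]
    {p : ℕ} (hp : 0 < p) (X : Ω → ℝ) (hXm : Measurable X)
    (m M : ℝ) (hmM : m ≤ M) (hX : ∀ ω, X ω ∈ Set.Icc m M)
    (f : Fin p → ℝ → ℝ)
    (hmono : ∀ i, Monotone (f i)) (hlip : ∀ i, LipschitzWith 1 (f i))
    (hsum : ∀ x : ℝ, ∑ i, f i x = x)
    (hextM : ∀ i, ∀ x ≥ M, f i x = f i M + (x - M) / p)
    (hextm : ∀ i, ∀ x ≤ m, f i x = f i m + (x - m) / p) :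
    (∀ i, StrictConvexOn ℝ Set.univ (legendre (fun x => ∫ s in (0:ℝ)..x, f i s)) ∧
      Continuous (legendre (fun x => ∫ s in (0:ℝ)..x, f i s))) ∧
    (∀ i, ∀ᵐ ω ∂μ, ∀ y : ℝ,
      legendre (fun x => ∫ s in (0:ℝ)..x, f i s) (f i (X ω))
          + X ω * (y - f i (X ω))
        ≤ legendre (fun x => ∫ s in (0:ℝ)..x, f i s) y) ∧
    (∀ Y : Fin p → Ω → ℝ, (∀ i, Measurable (Y i)) → (∀ i, ∃ C, ∀ ω, |Y i ω| ≤ C) →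
      (∀ ω, ∑ i, Y i ω = X ω) →
      ∫ ω, ∑ i, legendre (fun x => ∫ s in (0:ℝ)..x, f i s) (f i (X ω)) ∂μ
        ≤ ∫ ω, ∑ i, legendre (fun x => ∫ s in (0:ℝ)..x, f i s) (Y i ω) ∂μ) := by
  have hc : ∀ i, Continuous (f i) := fun i => (hlip i).continuous
  have hsurj : ∀ i, Function.Surjective (f i) :=
    fun i => surj (hc i) hp (hextM i) (hextm i)
  have hphi : ∀ i, (fun x => ∫ s in (0:ℝ)..x, f i s) = phi (f i) := fun i => rfl
  have hstrict : ∀ i, StrictConvexOn ℝ Set.univ (legendre (phi (f i))) :=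
    fun i => strictconv (hmono i) (hc i) (hsurj i)
  have hcont : ∀ i, Continuous (legendre (phi (f i))) := fun i =>
    continuousOn_univ.mp ((hstrict i).convexOn.continuousOn isOpen_univ)
  simp only [hphi]
  refine ⟨fun i => ⟨hstrict i, hcont i⟩, ?_, ?_⟩
  · intro i
    refine ae_of_all _ fun ω y => ?_
    have h1 := legendre_at (hmono i) (hc i) (X ω)
    have h2 := fenchel (hmono i) (hc i) (hsurj i) y (X ω)
    nlinarith [mul_comm (X ω) y]
  · intro Y hYm hYb hYsum
    -- pointwise inequality
    have pt : ∀ ω, ∑ i, legendre (phi (f i)) (f i (X ω))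
        ≤ ∑ i, legendre (phi (f i)) (Y i ω) := by
      intro ω
      have e1 : ∑ i, legendre (phi (f i)) (f i (X ω))
          = ∑ i, (f i (X ω) * X ω - phi (f i) (X ω)) :=
        Finset.sum_congr rfl fun i _ => legendre_at (hmono i) (hc i) (X ω)
      have e2 : ∑ i, (Y i ω * X ω - phi (f i) (X ω))
          ≤ ∑ i, legendre (phi (f i)) (Y i ω) :=
        Finset.sum_le_sum fun i _ =>
          fenchel (hmono i) (hc i) (hsurj i) (Y i ω) (X ω)
      have e3 : ∑ i, (f i (X ω) * X ω - phi (f i) (X ω))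
          = ∑ i, (Y i ω * X ω - phi (f i) (X ω)) := by
        rw [Finset.sum_sub_distrib, Finset.sum_sub_distrib,
          ← Finset.sum_mul, ← Finset.sum_mul, hsum, hYsum ω]
      linarith [e1, e2, e3]
    -- integrability of LHS
    have hgl : Continuous fun x : ℝ => ∑ i, legendre (phi (f i)) (f i x) :=
      continuous_finset_sum _ fun i _ => (hcont i).comp (hc i)
    obtain ⟨C1, hC1⟩ := (isCompact_Icc (a := m) (b := M)).exists_bound_of_continuousOn
      hgl.continuousOn
    have hint1 : Integrable (fun ω => ∑ i, legendre (phi (f i)) (f i (X ω))) μ := by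
      refine Integrable.mono' (integrable_const C1)
        ((hgl.measurable.comp hXm).aestronglyMeasurable) ?_
      exact ae_of_all _ fun ω => hC1 _ (hX ω)
    -- integrability of RHS
    have hint2 : Integrable (fun ω => ∑ i, legendre (phi (f i)) (Y i ω)) μ := by
      refine integrable_finset_sum _ fun i _ => ?_
      obtain ⟨C, hC⟩ := hYb i
      obtain ⟨D, hD⟩ := (isCompact_Icc (a := -C) (b := C)).exists_bound_of_continuousOn
        (hcont i).continuousOn
      refine Integrable.mono' (integrable_const D)
        (((hcont i).measurable.comp (hYm i)).aestronglyMeasurable) ?_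
      exact ae_of_all _ fun ω => hD _ (abs_le.mp (hC ω))
    exact integral_mono hint1 hint2 pt
end

section
/- Let ψ₁,...,ψ_p be continuous strictly convex functions on R^d, X a bounded R^d-valued random vector, and suppose the allocation (X₁,...,X_p) with Σᵢ Xᵢ = X satisfies E[Σᵢ ψᵢ(Xᵢ)] ≤ E[Σᵢ ψᵢ(Yᵢ)] for every allocation (Y₁,...,Y_p) of X. Then (X₁,...,X_p) is Pareto efficient for the concave order: no allocation of X strictly dominates it. -/
open MeasureTheory

lemma aux_integrable {Ω : Type*} [MeasurableSpace Ω] (μ : Measure Ω) [IsProbabilityMeasure μ]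
    {d : ℕ} {ψ : (Fin d → ℝ) → ℝ} (hψc : Continuous ψ)
    {W : Ω → (Fin d → ℝ)} (hWm : Measurable W) {C : ℝ} (hWb : ∀ ω, ‖W ω‖ ≤ C) :
    Integrable (fun ω => ψ (W ω)) μ := by
  obtain ⟨M, hM⟩ := (isCompact_closedBall (0 : Fin d → ℝ) C).exists_bound_of_continuousOn
    hψc.continuousOn
  refine Integrable.mono' (integrable_const M) (hψc.measurable.comp hWm).aestronglyMeasurable
    (Filter.Eventually.of_forall fun ω => ?_)
  exact hM _ (by simpa [Metric.mem_closedBall, dist_zero_right] using hWb ω)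

/-- An allocation of X among p agents: bounded measurable vectors summing to X. -/
def IsAlloc {Ω : Type*} [MeasurableSpace Ω] {d p : ℕ}
    (X : Ω → (Fin d → ℝ)) (Y : Fin p → Ω → (Fin d → ℝ)) : Prop :=
  (∀ i, Measurable (Y i)) ∧ (∀ i, ∃ C, ∀ ω, ‖Y i ω‖ ≤ C) ∧
    ∀ ω, ∑ i, Y i ω = X ω

/-- a minimizer of a strictly convex expected-cost risk-sharing
problem is Pareto efficient for the concave order. -/
theorem stmt11 {Ω : Type*} [MeasurableSpace Ω] (μ : Measure Ω) [IsProbabilityMeasure μ]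
    {d p : ℕ} (ψ : Fin p → (Fin d → ℝ) → ℝ)
    (hψc : ∀ i, Continuous (ψ i)) (hψs : ∀ i, StrictConvexOn ℝ Set.univ (ψ i))
    (X : Ω → (Fin d → ℝ)) (hXm : Measurable X) (hXb : ∃ C, ∀ ω, ‖X ω‖ ≤ C)
    (Xi : Fin p → Ω → (Fin d → ℝ)) (hXi : IsAlloc X Xi)
    (hmin : ∀ Y : Fin p → Ω → (Fin d → ℝ), IsAlloc X Y →
      ∫ ω, ∑ i, ψ i (Xi i ω) ∂μ ≤ ∫ ω, ∑ i, ψ i (Y i ω) ∂μ) :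
    ¬ ∃ Y : Fin p → Ω → (Fin d → ℝ), IsAlloc X Y ∧
        (∀ i, ConcaveDom μ (Y i) (Xi i)) ∧
        ∃ i, ∃ φ : (Fin d → ℝ) → ℝ, ConvexOn ℝ Set.univ φ ∧
          ∫ ω, φ (Y i ω) ∂μ < ∫ ω, φ (Xi i ω) ∂μ := by
  rintro ⟨Y, hY, hdom, i₀, φ, hφ, hlt⟩
  obtain ⟨hXim, hXib, hXis⟩ := hXi
  obtain ⟨hYm, hYb, hYs⟩ := hY
  -- integrability of each term
  have intX : ∀ i, Integrable (fun ω => ψ i (Xi i ω)) μ := fun i => by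
    obtain ⟨C, hC⟩ := hXib i; exact aux_integrable μ (hψc i) (hXim i) hC
  have intY : ∀ i, Integrable (fun ω => ψ i (Y i ω)) μ := fun i => by
    obtain ⟨C, hC⟩ := hYb i; exact aux_integrable μ (hψc i) (hYm i) hC
  -- the midpoint allocation
  set Z : Fin p → Ω → (Fin d → ℝ) := fun i ω => (2⁻¹ : ℝ) • Xi i ω + (2⁻¹ : ℝ) • Y i ω with hZ
  have hZm : ∀ i, Measurable (Z i) := fun i => by
    exact Measurable.add (fun s hs => by exact ((hXim i).const_smul (2⁻¹:ℝ)) hs)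
      ((hYm i).const_smul (2⁻¹:ℝ))
  have hZalloc : IsAlloc X Z := by
    refine ⟨hZm, fun i => ?_, fun ω => ?_⟩
    · obtain ⟨C1, h1⟩ := hXib i; obtain ⟨C2, h2⟩ := hYb i
      refine ⟨C1 + C2, fun ω => ?_⟩
      calc ‖Z i ω‖ ≤ ‖(2⁻¹:ℝ) • Xi i ω‖ + ‖(2⁻¹:ℝ) • Y i ω‖ := norm_add_le _ _
        _ ≤ C1 + C2 := by
            rw [norm_smul, norm_smul]
            have hn : ‖(2⁻¹:ℝ)‖ = 2⁻¹ := by norm_num [Real.norm_eq_abs]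
            rw [hn]
            have := h1 ω; have := h2 ω
            have h1' : (0:ℝ) ≤ C1 := le_trans (norm_nonneg _) (h1 ω)
            have h2' : (0:ℝ) ≤ C2 := le_trans (norm_nonneg _) (h2 ω)
            nlinarith [norm_nonneg (Xi i ω), norm_nonneg (Y i ω)]
    · simp only [hZ, Finset.sum_add_distrib, ← Finset.smul_sum, hXis ω, hYs ω, ← add_smul]
      norm_num
  have intZ : ∀ i, Integrable (fun ω => ψ i (Z i ω)) μ := fun i => by
    obtain ⟨C, hC⟩ := hZalloc.2.1 i; exact aux_integrable μ (hψc i) (hZm i) hC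
  -- ∫ Σψ(Y) ≤ ∫ Σψ(Xi) from domination
  have hsumY : ∫ ω, ∑ i, ψ i (Y i ω) ∂μ ≤ ∫ ω, ∑ i, ψ i (Xi i ω) ∂μ := by
    rw [integral_finset_sum _ (fun i _ => intY i), integral_finset_sum _ (fun i _ => intX i)]
    exact Finset.sum_le_sum fun i _ => hdom i (ψ i) (hψs i).convexOn
  have hEq : ∫ ω, ∑ i, ψ i (Y i ω) ∂μ = ∫ ω, ∑ i, ψ i (Xi i ω) ∂μ :=
    le_antisymm hsumY (hmin Y ⟨hYm, hYb, hYs⟩)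
  -- pointwise midpoint inequality
  have hpt : ∀ ω, ∀ i, ψ i (Z i ω) ≤ 2⁻¹ * ψ i (Xi i ω) + 2⁻¹ * ψ i (Y i ω) := by
    intro ω i
    have := (hψs i).convexOn.2 (Set.mem_univ (Xi i ω)) (Set.mem_univ (Y i ω))
      (by norm_num : (0:ℝ) ≤ 2⁻¹) (by norm_num : (0:ℝ) ≤ 2⁻¹) (by norm_num)
    simpa [smul_eq_mul] using this
  have hptsum : ∀ ω, ∑ i, ψ i (Z i ω) ≤
      ∑ i, (2⁻¹ * ψ i (Xi i ω) + 2⁻¹ * ψ i (Y i ω)) :=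
    fun ω => Finset.sum_le_sum fun i _ => hpt ω i
  -- RHS integrable
  have intR : Integrable (fun ω => ∑ i, (2⁻¹ * ψ i (Xi i ω) + 2⁻¹ * ψ i (Y i ω))) μ :=
    integrable_finset_sum _ fun i _ => ((intX i).const_mul _).add ((intY i).const_mul _)
  have intZsum : Integrable (fun ω => ∑ i, ψ i (Z i ω)) μ :=
    integrable_finset_sum _ fun i _ => intZ i
  -- ∫ RHS = ∫ Σψ(Xi)
  have hRint : ∫ ω, ∑ i, (2⁻¹ * ψ i (Xi i ω) + 2⁻¹ * ψ i (Y i ω)) ∂μ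
      = ∫ ω, ∑ i, ψ i (Xi i ω) ∂μ := by
    have : (fun ω => ∑ i, (2⁻¹ * ψ i (Xi i ω) + 2⁻¹ * ψ i (Y i ω)))
        = fun ω => 2⁻¹ * (∑ i, ψ i (Xi i ω)) + 2⁻¹ * (∑ i, ψ i (Y i ω)) := by
      funext ω; rw [Finset.sum_add_distrib, ← Finset.mul_sum, ← Finset.mul_sum]
    rw [this, integral_add ((integrable_finset_sum _ fun i _ => intX i).const_mul _)
      ((integrable_finset_sum _ fun i _ => intY i).const_mul _),
      integral_const_mul, integral_const_mul, hEq]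
    ring
  have hZge : ∫ ω, ∑ i, ψ i (Xi i ω) ∂μ ≤ ∫ ω, ∑ i, ψ i (Z i ω) ∂μ := hmin Z hZalloc
  have hZle : ∫ ω, ∑ i, ψ i (Z i ω) ∂μ
      ≤ ∫ ω, ∑ i, (2⁻¹ * ψ i (Xi i ω) + 2⁻¹ * ψ i (Y i ω)) ∂μ :=
    integral_mono intZsum intR hptsum
  have hIeq : ∫ ω, ∑ i, ψ i (Z i ω) ∂μ
      = ∫ ω, ∑ i, (2⁻¹ * ψ i (Xi i ω) + 2⁻¹ * ψ i (Y i ω)) ∂μ :=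
    le_antisymm hZle (hRint ▸ hZge)
  have hae : (fun ω => ∑ i, ψ i (Z i ω)) =ᵐ[μ]
      (fun ω => ∑ i, (2⁻¹ * ψ i (Xi i ω) + 2⁻¹ * ψ i (Y i ω))) :=
    (integral_eq_iff_of_ae_le intZsum intR (Filter.Eventually.of_forall hptsum)).mp hIeq
  -- a.e. equality of sums + termwise ≤ ⇒ a.e. Xi i₀ = Y i₀
  have haeXY : Xi i₀ =ᵐ[μ] Y i₀ := by
    filter_upwards [hae] with ω hω
    by_contra hne
    have hstrict : ψ i₀ (Z i₀ ω) < 2⁻¹ * ψ i₀ (Xi i₀ ω) + 2⁻¹ * ψ i₀ (Y i₀ ω) := by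
      have := (hψs i₀).2 (Set.mem_univ (Xi i₀ ω)) (Set.mem_univ (Y i₀ ω)) hne
        (by norm_num : (0:ℝ) < 2⁻¹) (by norm_num : (0:ℝ) < 2⁻¹) (by norm_num)
      simpa [smul_eq_mul] using this
    have : ∑ i, ψ i (Z i ω) < ∑ i, (2⁻¹ * ψ i (Xi i ω) + 2⁻¹ * ψ i (Y i ω)) :=
      Finset.sum_lt_sum (fun i _ => hpt ω i) ⟨i₀, Finset.mem_univ _, hstrict⟩
    exact absurd hω (ne_of_lt this)
  have : ∫ ω, φ (Y i₀ ω) ∂μ = ∫ ω, φ (Xi i₀ ω) ∂μ :=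
    integral_congr_ae (haeXY.symm.fun_comp φ)
  exact absurd hlt (by rw [this]; exact lt_irrefl _)
end

section
/- Let K be the set of pairs of 2×2 real matrices (S₁(S₁+S₂)^{-1}, S₂(S₁+S₂)^{-1}) where S₁, S₂ range over symmetric positive definite 2×2 matrices. Then K is not convex. Specifically, with S₁ = [[1, √(1−ε)],[√(1−ε), 1]], S₂ = [[1, −√(1−ε)],[−√(1−ε), 1]], S₁' = [[1, √(n−ε)],[√(n−ε), n]], S₂' = [[1, −√(n−ε)],[−√(n−ε), n]], and Mᵢ = Sᵢ(S₁+S₂)^{-1}, Mᵢ' = Sᵢ'(S₁'+S₂')^{-1}, the matrix M₁ + M₁' has negative determinant for n large and ε small, whereas every first component of an element of K has positive determinant. -/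
open Matrix

/-- The set of pairs (S₁(S₁+S₂)⁻¹, S₂(S₁+S₂)⁻¹) with S₁, S₂ symmetric positive
definite 2×2 real matrices. -/
def Kset : Set (Matrix (Fin 2) (Fin 2) ℝ × Matrix (Fin 2) (Fin 2) ℝ) :=
  {P | ∃ S₁ S₂ : Matrix (Fin 2) (Fin 2) ℝ, S₁.PosDef ∧ S₂.PosDef ∧
    P = (S₁ * (S₁ + S₂)⁻¹, S₂ * (S₁ + S₂)⁻¹)}

lemma posdef_two (a d : ℝ) (h : a ^ 2 < d) : (!![1, a; a, d]).PosDef := by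
  rw [Matrix.posDef_iff_dotProduct_mulVec]
  constructor
  · ext i j
    fin_cases i <;> fin_cases j <;> simp [Matrix.conjTranspose, Matrix.transpose]
  · intro x hx
    have h01 : x 0 ≠ 0 ∨ x 1 ≠ 0 := by
      by_contra hc
      push_neg at hc
      exact hx (funext fun i => by fin_cases i <;> simp [hc.1, hc.2])
    have hexp : dotProduct (star x) ((!![1, a; a, d]) *ᵥ x) =
        x 0 ^ 2 + 2 * a * (x 0 * x 1) + d * x 1 ^ 2 := by
      simp [dotProduct, Matrix.mulVec, Fin.sum_univ_two]
      ring
    rw [hexp]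
    by_cases h1 : x 1 = 0
    · have h0 : x 0 ≠ 0 := by
        rcases h01 with h0 | h1' ; · exact h0
        · exact absurd h1 h1'
      rw [h1]
      nlinarith [sq_pos_of_ne_zero h0]
    · nlinarith [sq_nonneg (x 0 + a * x 1), sq_pos_of_ne_zero h1]

lemma Kset_pos : ∀ P ∈ Kset, 0 < P.1.det := by
  rintro P ⟨S₁, S₂, h1, h2, rfl⟩
  have hsum : (S₁ + S₂).PosDef := h1.add h2
  simp only [Matrix.det_mul, Matrix.det_nonsing_inv, Ring.inverse_eq_inv']
  exact mul_pos h1.det_pos (inv_pos.2 hsum.det_pos)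

/-- K is not convex; every first component of an element of K has
positive determinant, while for the explicit family above, M₁ + M₁' has
negative determinant for n large and ε small. -/
theorem stmt18 :
    (∀ P ∈ Kset, 0 < P.1.det) ∧
    ¬ Convex ℝ Kset ∧
    ∃ (n : ℕ) (ε : ℝ), 0 < ε ∧ ε < 1 ∧
      ((!![(1:ℝ), Real.sqrt (1 - ε); Real.sqrt (1 - ε), 1] *
          (!![(1:ℝ), Real.sqrt (1 - ε); Real.sqrt (1 - ε), 1] +
           !![(1:ℝ), -Real.sqrt (1 - ε); -Real.sqrt (1 - ε), 1])⁻¹ +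
        !![(1:ℝ), Real.sqrt (n - ε); Real.sqrt (n - ε), (n : ℝ)] *
          (!![(1:ℝ), Real.sqrt (n - ε); Real.sqrt (n - ε), (n : ℝ)] +
           !![(1:ℝ), -Real.sqrt (n - ε); -Real.sqrt (n - ε), (n : ℝ)])⁻¹).det < 0) := by
  -- abbreviations
  set a : ℝ := Real.sqrt (1 - (1/2 : ℝ)) with ha_def
  set b : ℝ := Real.sqrt (((100:ℕ) : ℝ) - (1/2 : ℝ)) with hb_def
  have ha2 : a ^ 2 = 1/2 := by
    rw [ha_def, Real.sq_sqrt] <;> norm_num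
  have hb2 : b ^ 2 = 199/2 := by
    rw [hb_def]
    rw [show (((100:ℕ):ℝ) - (1/2:ℝ)) = 199/2 by norm_num, Real.sq_sqrt] ; norm_num
  have ha0 : 0 ≤ a := Real.sqrt_nonneg _
  have hb0 : 0 ≤ b := Real.sqrt_nonneg _
  -- the matrices
  have hS1 : (!![(1:ℝ), a; a, 1]).PosDef := posdef_two a 1 (by rw [ha2]; norm_num)
  have hS2 : (!![(1:ℝ), -a; -a, 1]).PosDef := posdef_two (-a) 1 (by rw [neg_pow, ha2]; norm_num)
  have hS1' : (!![(1:ℝ), b; b, ((100:ℕ):ℝ)]).PosDef := by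
    have := posdef_two b ((100:ℕ):ℝ) (by rw [hb2]; norm_num)
    exact this
  have hS2' : (!![(1:ℝ), -b; -b, ((100:ℕ):ℝ)]).PosDef := by
    have := posdef_two (-b) ((100:ℕ):ℝ) (by rw [neg_pow, hb2]; norm_num)
    exact this
  -- sums and inverses
  have hsum1 : !![(1:ℝ), a; a, 1] + !![(1:ℝ), -a; -a, 1] = !![(2:ℝ), 0; 0, 2] := by
    ext i j; fin_cases i <;> fin_cases j <;> norm_num <;> ring
  have hsum2 : !![(1:ℝ), b; b, ((100:ℕ):ℝ)] + !![(1:ℝ), -b; -b, ((100:ℕ):ℝ)]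
      = !![(2:ℝ), 0; 0, 200] := by
    ext i j; fin_cases i <;> fin_cases j <;> norm_num <;> ring
  have hinv1 : (!![(2:ℝ), 0; 0, 2])⁻¹ = !![(1/2:ℝ), 0; 0, 1/2] :=
    inv_eq_right_inv (by rw [Matrix.mul_fin_two, Matrix.one_fin_two]; norm_num)
  have hinv2 : (!![(2:ℝ), 0; 0, 200])⁻¹ = !![(1/2:ℝ), 0; 0, 1/200] :=
    inv_eq_right_inv (by rw [Matrix.mul_fin_two, Matrix.one_fin_two]; norm_num)
  have hM1 : !![(1:ℝ), a; a, 1] * (!![(1:ℝ), a; a, 1] + !![(1:ℝ), -a; -a, 1])⁻¹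
      = !![(1/2:ℝ), a/2; a/2, 1/2] := by
    rw [hsum1, hinv1, Matrix.mul_fin_two]
    ext i j; fin_cases i <;> fin_cases j <;> norm_num <;> ring
  have hM1' : !![(1:ℝ), b; b, ((100:ℕ):ℝ)] *
      (!![(1:ℝ), b; b, ((100:ℕ):ℝ)] + !![(1:ℝ), -b; -b, ((100:ℕ):ℝ)])⁻¹
      = !![(1/2:ℝ), b/200; b/2, 1/2] := by
    rw [hsum2, hinv2, Matrix.mul_fin_two]
    ext i j; fin_cases i <;> fin_cases j <;> norm_num <;> ring
  -- the key determinant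
  have hkey : (!![(1/2:ℝ), a/2; a/2, 1/2] + !![(1/2:ℝ), b/200; b/2, 1/2]).det < 0 := by
    have : (!![(1/2:ℝ), a/2; a/2, 1/2] + !![(1/2:ℝ), b/200; b/2, 1/2])
        = !![(1:ℝ), a/2 + b/200; a/2 + b/2, 1] := by
      ext i j; fin_cases i <;> fin_cases j <;> norm_num <;> ring
    rw [this, Matrix.det_fin_two_of]
    nlinarith [mul_nonneg ha0 hb0, sq_nonneg (a*b), sq_nonneg (a*b - 3), sq_nonneg (a - b)]
  refine ⟨Kset_pos, ?_, 100, 1/2, by norm_num, by norm_num, by rw [hM1, hM1']; exact hkey⟩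
  intro hconv
  have hp : (!![(1:ℝ), a; a, 1] * (!![(1:ℝ), a; a, 1] + !![(1:ℝ), -a; -a, 1])⁻¹,
      !![(1:ℝ), -a; -a, 1] * (!![(1:ℝ), a; a, 1] + !![(1:ℝ), -a; -a, 1])⁻¹) ∈ Kset :=
    ⟨_, _, hS1, hS2, rfl⟩
  have hq : (!![(1:ℝ), b; b, ((100:ℕ):ℝ)] *
      (!![(1:ℝ), b; b, ((100:ℕ):ℝ)] + !![(1:ℝ), -b; -b, ((100:ℕ):ℝ)])⁻¹,
      !![(1:ℝ), -b; -b, ((100:ℕ):ℝ)] *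
      (!![(1:ℝ), b; b, ((100:ℕ):ℝ)] + !![(1:ℝ), -b; -b, ((100:ℕ):ℝ)])⁻¹) ∈ Kset :=
    ⟨_, _, hS1', hS2', rfl⟩
  have hmid := hconv hp hq (by norm_num : (0:ℝ) ≤ 1/2) (by norm_num : (0:ℝ) ≤ 1/2)
    (by norm_num)
  have hposmid := Kset_pos _ hmid
  have hfst : ((1/2:ℝ) • (!![(1:ℝ), a; a, 1] * (!![(1:ℝ), a; a, 1] + !![(1:ℝ), -a; -a, 1])⁻¹,
      !![(1:ℝ), -a; -a, 1] * (!![(1:ℝ), a; a, 1] + !![(1:ℝ), -a; -a, 1])⁻¹)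
      + (1/2:ℝ) • (!![(1:ℝ), b; b, ((100:ℕ):ℝ)] *
      (!![(1:ℝ), b; b, ((100:ℕ):ℝ)] + !![(1:ℝ), -b; -b, ((100:ℕ):ℝ)])⁻¹,
      !![(1:ℝ), -b; -b, ((100:ℕ):ℝ)] *
      (!![(1:ℝ), b; b, ((100:ℕ):ℝ)] + !![(1:ℝ), -b; -b, ((100:ℕ):ℝ)])⁻¹)).1
      = (1/2:ℝ) • (!![(1/2:ℝ), a/2; a/2, 1/2] + !![(1/2:ℝ), b/200; b/2, 1/2]) := by
    simp only [Prod.fst_add, Prod.smul_fst, hM1, hM1', smul_add]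
  rw [hfst] at hposmid
  rw [Matrix.det_smul] at hposmid
  simp only [Fintype.card_fin] at hposmid
  nlinarith [hkey, hposmid]
end

section
/- The family of linear maps of the form S₁(S₁+S₂)^{-1} with S₁, S₂ symmetric positive definite 2×2 matrices is unbounded: for each n ≥ 1, taking S₁ = [[1/2, 1/(8√n)],[1/(8√n), 1/(2n)]] and S₂ = [[1/2, −1/(8√n)],[−1/(8√n), 1/(2n)]] yields S₁(S₁+S₂)^{-1} = [[1/2, √n/8],[1/(8√n), 1/2]], whose operator norm tends to infinity as n → ∞. -/
open Matrix Filter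

attribute [local instance] Matrix.linftyOpNormedAddCommGroup

lemma posDef_fin_two {a b c : ℝ} (ha : 0 < a) (hd : b ^ 2 < a * c) :
    (!![a, b; b, c] : Matrix (Fin 2) (Fin 2) ℝ).PosDef := by
  rw [Matrix.posDef_iff_dotProduct_mulVec]
  constructor
  · ext i j; fin_cases i <;> fin_cases j <;> simp [Matrix.IsHermitian]
  · intro x hx
    have h01 : x 0 ≠ 0 ∨ x 1 ≠ 0 := by
      by_contra h
      push_neg at h
      exact hx (funext fun i => by fin_cases i <;> simp [h.1, h.2])
    have : dotProduct (star x) ((!![a, b; b, c] : Matrix (Fin 2) (Fin 2) ℝ) *ᵥ x)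
        = a * x 0 ^ 2 + 2 * b * (x 0 * x 1) + c * x 1 ^ 2 := by
      simp [dotProduct, Matrix.mulVec, Fin.sum_univ_two]
      ring
    rw [this]
    rcases eq_or_ne (x 1) 0 with h | h
    · have h0 : x 0 ≠ 0 := by tauto
      rw [h]; nlinarith [mul_pos ha (sq_pos_of_ne_zero h0)]
    · nlinarith [sq_nonneg (a * x 0 + b * x 1), sq_pos_of_ne_zero h]

lemma entry_le_linfty (A : Matrix (Fin 2) (Fin 2) ℝ) (i j : Fin 2) :
    ‖A i j‖ ≤ ‖A‖ := by
  rw [Matrix.linfty_opNorm_def]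
  have h1 : ‖A i j‖₊ ≤ ∑ k, ‖A i k‖₊ :=
    Finset.single_le_sum (f := fun k => ‖A i k‖₊) (fun k _ => zero_le) (Finset.mem_univ j)
  have h2 : (∑ k, ‖A i k‖₊) ≤ (Finset.univ : Finset (Fin 2)).sup
      fun i : Fin 2 => ∑ j : Fin 2, ‖A i j‖₊ :=
    Finset.le_sup (f := fun i : Fin 2 => ∑ j : Fin 2, ‖A i j‖₊) (Finset.mem_univ i)
  exact_mod_cast h1.trans h2

/-- The first matrix of the family, S₁ⁿ. -/
noncomputable def S1 (n : ℕ) : Matrix (Fin 2) (Fin 2) ℝ :=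
  !![(1:ℝ)/2, 1/(8 * Real.sqrt n); 1/(8 * Real.sqrt n), 1/(2 * n)]

/-- The second matrix of the family, S₂ⁿ. -/
noncomputable def S2 (n : ℕ) : Matrix (Fin 2) (Fin 2) ℝ :=
  !![(1:ℝ)/2, -(1/(8 * Real.sqrt n)); -(1/(8 * Real.sqrt n)), 1/(2 * n)]

lemma main_part (n : ℕ) (hn : 1 ≤ n) :
      (S1 n).PosDef ∧ (S2 n).PosDef ∧
      S1 n * (S1 n + S2 n)⁻¹ =
        !![(1:ℝ)/2, Real.sqrt n / 8; 1/(8 * Real.sqrt n), 1/2] := by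
  have hn0 : (0:ℝ) < (n:ℝ) := by exact_mod_cast hn
  have hs : (0:ℝ) < Real.sqrt n := Real.sqrt_pos.2 hn0
  have hs2 : Real.sqrt n * Real.sqrt n = (n:ℝ) := Real.mul_self_sqrt hn0.le
  have hsq : Real.sqrt n ^ 2 = (n:ℝ) := Real.sq_sqrt hn0.le
  have hdisc : (1/(8 * Real.sqrt n)) ^ 2 < (1/2 : ℝ) * (1/(2 * (n:ℝ))) := by
    rw [div_pow, mul_pow, hsq, one_pow,
      show (1/2 : ℝ) * (1/(2 * (n:ℝ))) = 1 / (4 * n) by ring]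
    apply div_lt_div_of_pos_left one_pos (by positivity)
    nlinarith
  have hdisc2 : (-(1/(8 * Real.sqrt n))) ^ 2 < (1/2 : ℝ) * (1/(2 * (n:ℝ))) := by
    rwa [neg_sq]
  refine ⟨posDef_fin_two one_half_pos hdisc, posDef_fin_two one_half_pos hdisc2, ?_⟩
  have hsum : S1 n + S2 n = !![(1:ℝ), 0; 0, 1/(n:ℝ)] := by
    unfold S1 S2
    ext i j
    fin_cases i <;> fin_cases j <;> simp <;> ring
  have hinv : (S1 n + S2 n)⁻¹ = !![(1:ℝ), 0; 0, (n:ℝ)] := by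
    rw [hsum]
    apply Matrix.inv_eq_right_inv
    ext i j
    fin_cases i <;> fin_cases j <;>
      simp [Matrix.mul_apply, Fin.sum_univ_two, hn0.ne']
  rw [hinv]
  unfold S1
  ext i j
  fin_cases i <;> fin_cases j <;>
    simp [Matrix.mul_apply, Fin.sum_univ_two] <;>
    field_simp <;> nlinarith [hs2, hs]

/-- the family S₁(S₁+S₂)⁻¹ with S₁, S₂ symmetric positive
definite is unbounded: for each n ≥ 1 the given S₁, S₂ are positive definite,
S₁(S₁+S₂)⁻¹ is the explicit matrix below, and its norm tends to infinity. -/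
theorem stmt19 :
    (∀ n : ℕ, 1 ≤ n →
      (S1 n).PosDef ∧ (S2 n).PosDef ∧
      S1 n * (S1 n + S2 n)⁻¹ =
        !![(1:ℝ)/2, Real.sqrt n / 8; 1/(8 * Real.sqrt n), 1/2]) ∧
    Tendsto (fun n : ℕ => ‖S1 n * (S1 n + S2 n)⁻¹‖) atTop atTop := by
  refine ⟨main_part, ?_⟩
  have hlow : ∀ᶠ n : ℕ in atTop, Real.sqrt n / 8 ≤ ‖S1 n * (S1 n + S2 n)⁻¹‖ := by
    filter_upwards [eventually_ge_atTop 1] with n hn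
    have h := (main_part n hn).2.2
    calc Real.sqrt n / 8 = ‖(S1 n * (S1 n + S2 n)⁻¹) 0 1‖ := by
          rw [h]; simp [Real.norm_of_nonneg, abs_of_nonneg,
            div_nonneg (Real.sqrt_nonneg _) (by norm_num : (0:ℝ) ≤ 8)]
      _ ≤ _ := entry_le_linfty _ _ _
  refine tendsto_atTop_mono' _ hlow ?_
  refine tendsto_atTop_atTop.2 fun b => ⟨⌈(8*b)^2⌉₊, fun n hn => ?_⟩
  have h1 : ((8*b)^2 : ℝ) ≤ (n:ℝ) := le_trans (Nat.le_ceil _) (by exact_mod_cast hn)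
  have h2 : |8*b| ≤ Real.sqrt n := by
    rw [← Real.sqrt_sq_eq_abs]
    exact Real.sqrt_le_sqrt h1
  have := (le_abs_self (8*b)).trans h2
  linarith
end
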